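/- arXiv:2308.09754 — 7 statements merged into one kernel-verified Lean document; each statement's English description precedes it below -/
import Mathlib

section
/- For n > 0 there exists C > 0 such that for all t ≥ 1, | (4πt)^(-n/2) ∫_{ℝⁿ} e^(-|y|²/(4t)) ⟨y⟩^(-n) dy − (4π)^(-n/2) (1/2) |S^{n-1}| t^(-n/2) ln(1+t) | ≤ C t^(-n/2), where |S^{n-1}| is the surface measure of the unit sphere in ℝⁿ. -/
open MeasureTheory Real Set

lemma aux_pow_sub_pow_le {r s : ℝ} (h0 : 0 ≤ r) (hrs : r ≤ s) (m : ℕ) :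
    s ^ (m+1) - r ^ (m+1) ≤ (m+1 : ℝ) * s ^ m * (s - r) := by
  have hs : 0 ≤ s := h0.trans hrs
  rw [← geom_sum₂_mul]
  have hsum : (∑ i ∈ Finset.range (m+1), s ^ i * r ^ (m + 1 - 1 - i)) ≤ (m+1 : ℝ) * s ^ m := by
    calc (∑ i ∈ Finset.range (m+1), s ^ i * r ^ (m + 1 - 1 - i))
        ≤ ∑ _i ∈ Finset.range (m+1), s ^ m := by
          apply Finset.sum_le_sum
          intro i hi
          have hi' : i ≤ m := Nat.lt_succ_iff.mp (Finset.mem_range.mp hi)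
          calc s ^ i * r ^ (m + 1 - 1 - i) ≤ s ^ i * s ^ (m + 1 - 1 - i) :=
                mul_le_mul_of_nonneg_left (pow_le_pow_left₀ h0 hrs _) (pow_nonneg hs i)
            _ = s ^ m := by rw [← pow_add]; congr 1; omega
      _ = (m+1 : ℝ) * s ^ m := by
          rw [Finset.sum_const, Finset.card_range, nsmul_eq_mul]; push_cast; ring
  exact mul_le_mul_of_nonneg_right hsum (sub_nonneg.mpr hrs)

lemma aux_pointwise (n : ℕ) (hn : 0 < n) {r : ℝ} (hr : 0 ≤ r) :
    |r / (1 + r^2) - r^(n-1) / Real.sqrt (1+r^2) ^ n| ≤ n / (1 + r^2) := by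
  set s := Real.sqrt (1+r^2) with hs_def
  have hP : (0:ℝ) < 1 + r^2 := by positivity
  have hs2 : s^2 = 1 + r^2 := Real.sq_sqrt hP.le
  have hs1 : 1 ≤ s := by
    have h := Real.sqrt_le_sqrt (show (1:ℝ) ≤ 1+r^2 by nlinarith)
    rwa [Real.sqrt_one] at h
  have hs0 : 0 < s := lt_of_lt_of_le one_pos hs1
  have hrs : r ≤ s := by
    have h := Real.sqrt_le_sqrt (show r^2 ≤ 1+r^2 by linarith)
    rwa [Real.sqrt_sq hr] at h
  have hsr1 : s - r ≤ 1 := by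
    have h := Real.sqrt_le_sqrt (show 1+r^2 ≤ (1+r)^2 by nlinarith)
    rw [Real.sqrt_sq (by linarith : (0:ℝ) ≤ 1+r)] at h
    linarith
  match n, hn with
  | 1, _ =>
    have h1 : r^(1-1) / s ^ 1 = s / (1+r^2) := by
      rw [pow_zero, pow_one, ← hs2]
      field_simp
    rw [h1, div_sub_div_same, abs_div, abs_of_pos hP, Nat.cast_one]
    gcongr
    exact abs_le.mpr ⟨by linarith, by linarith⟩
  | 2, _ =>
    have h1 : r^(2-1) / s ^ 2 = r / (1+r^2) := by rw [hs2]; norm_num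
    rw [h1, sub_self, abs_zero]
    positivity
  | (m+3), _ =>
    have hsm : (0:ℝ) < s ^ (m+3) := by positivity
    have hne : s^(m+1) ≠ 0 := by positivity
    have hpow : r^(m+1) ≤ s^(m+1) := pow_le_pow_left₀ hr hrs _
    have key : r / (1 + r^2) - r^(m+3-1) / s ^ (m+3) = r * (s^(m+1) - r^(m+1)) / s^(m+3) := by
      rw [← hs2, show m+3-1 = m+2 from rfl]
      field_simp
      ring
    have hnum0 : 0 ≤ r * (s^(m+1) - r^(m+1)) := mul_nonneg hr (by linarith)
    rw [key, abs_of_nonneg (div_nonneg hnum0 hsm.le)]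
    have hnum : r * (s^(m+1) - r^(m+1)) ≤ (m+1 : ℝ) * s^(m+1) := by
      calc r * (s^(m+1) - r^(m+1)) ≤ s * ((m+1 : ℝ) * s ^ m * (s - r)) :=
            mul_le_mul hrs (aux_pow_sub_pow_le hr hrs m) (by linarith) hs0.le
        _ ≤ s * ((m+1 : ℝ) * s ^ m * 1) := by gcongr
        _ = (m+1 : ℝ) * s^(m+1) := by ring
    calc r * (s^(m+1) - r^(m+1)) / s^(m+3) ≤ ((m+1:ℝ) * s^(m+1)) / s^(m+3) := by gcongr
      _ = (m+1:ℝ) / s^2 := by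
          rw [show s^(m+3) = s^2 * s^(m+1) by ring]
          exact mul_div_mul_right _ _ hne
      _ ≤ (m+3:ℕ) / (1+r^2) := by
          rw [hs2]
          gcongr
          push_cast; linarith

lemma aux_core (n : ℕ) (hn : 0 < n) {t : ℝ} (ht : 1 ≤ t) :
    |(∫ r in Ioi (0:ℝ), r ^ (n-1) * (Real.exp (-r^2/(4*t)) * (Real.sqrt (1+r^2) ^ n)⁻¹))
      - 1/2 * Real.log (1+t)|
    ≤ (∫ r in Ioi (0:ℝ), (n:ℝ)/(1+r^2)) + 3 := by
  have ht0 : (0:ℝ) < t := lt_of_lt_of_le one_pos ht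
  set a := Real.sqrt t with ha_def
  have ha2 : a^2 = t := Real.sq_sqrt ht0.le
  have ha0 : 0 < a := Real.sqrt_pos.mpr ht0
  set H : ℝ → ℝ := fun r => r ^ (n-1) * (Real.exp (-r^2/(4*t)) * (Real.sqrt (1+r^2) ^ n)⁻¹)
    with hH_def
  set h₀ : ℝ → ℝ := fun r => r ^ (n-1) * (Real.sqrt (1+r^2) ^ n)⁻¹ with hh0_def
  set g : ℝ → ℝ := fun r => r / (1+r^2) with hg_def
  have hsq : ∀ r : ℝ, (0:ℝ) < Real.sqrt (1+r^2) ^ n := fun r =>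
    pow_pos (Real.sqrt_pos.mpr (by positivity)) n
  have contsq : Continuous fun r : ℝ => (Real.sqrt (1+r^2) ^ n)⁻¹ := by
    apply Continuous.inv₀
    · exact (Real.continuous_sqrt.comp (continuous_const.add (continuous_pow 2))).pow n
    · exact fun r => (hsq r).ne'
  have contexp : Continuous fun r : ℝ => Real.exp (-r^2/(4*t)) :=
    Real.continuous_exp.comp (((continuous_pow 2).neg).div_const (4*t))
  have contH : Continuous H := (continuous_pow _).mul (contexp.mul contsq)
  have conth₀ : Continuous h₀ := (continuous_pow _).mul contsq
  have contg : Continuous g := by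
    apply Continuous.div continuous_id (continuous_const.add (continuous_pow 2))
    intro x; exact (by positivity : (0:ℝ) < 1 + x^2).ne'
  -- basic sqrt facts
  have hs1 : ∀ r : ℝ, 1 ≤ Real.sqrt (1+r^2) := fun r => by
    have h := Real.sqrt_le_sqrt (show (1:ℝ) ≤ 1+r^2 by nlinarith)
    rwa [Real.sqrt_one] at h
  have hrs : ∀ r : ℝ, 0 ≤ r → r ≤ Real.sqrt (1+r^2) := fun r hr => by
    have h := Real.sqrt_le_sqrt (show r^2 ≤ 1+r^2 by linarith)
    rwa [Real.sqrt_sq hr] at h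
  have hb : (0:ℝ) < 1/(4*t) := by positivity
  -- integrability of H on Ioi 0
  have intH : IntegrableOn H (Ioi 0) := by
    apply Integrable.mono' (integrableOn_rpow_mul_exp_neg_mul_sq hb
      (show (-1:ℝ) < ((n-1 : ℕ):ℝ) from lt_of_lt_of_le (by norm_num) (Nat.cast_nonneg _)))
      contH.aestronglyMeasurable.restrict
    filter_upwards [ae_restrict_mem measurableSet_Ioi] with r hr
    have hr0 : (0:ℝ) < r := hr
    rw [Real.rpow_natCast, Real.norm_eq_abs, abs_of_nonneg (by positivity :(0:ℝ) ≤ H r)]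
    simp only [hH_def]
    rw [show -(1/(4*t)) * r^2 = -r^2/(4*t) by ring]
    have : (Real.sqrt (1+r^2) ^ n)⁻¹ ≤ 1 :=
      inv_le_one_of_one_le₀ (one_le_pow₀ (hs1 r))
    calc r ^ (n-1) * (Real.exp (-r^2/(4*t)) * (Real.sqrt (1+r^2) ^ n)⁻¹)
        ≤ r ^ (n-1) * (Real.exp (-r^2/(4*t)) * 1) := by
          gcongr
      _ = r ^ (n-1) * Real.exp (-r^2/(4*t)) := by ring
  have intH_Ioc : IntegrableOn H (Ioc 0 a) := contH.integrableOn_Ioc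
  have inth0_Ioc : IntegrableOn h₀ (Ioc 0 a) := conth₀.integrableOn_Ioc
  have intg_Ioc : IntegrableOn g (Ioc 0 a) := contg.integrableOn_Ioc
  -- split
  have hsplit : (∫ r in Ioi (0:ℝ), H r) = (∫ r in Ioc 0 a, H r) + (∫ r in Ioi a, H r) := by
    rw [← setIntegral_union (Set.Ioc_disjoint_Ioi le_rfl) measurableSet_Ioi intH_Ioc
      (intH.mono_set (Ioi_subset_Ioi ha0.le)), Set.Ioc_union_Ioi_eq_Ioi ha0.le]
  -- log integral
  have hlog : (∫ r in Ioc 0 a, g r) = 1/2 * Real.log (1+t) := by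
    rw [← intervalIntegral.integral_of_le ha0.le]
    have hD : ∀ x ∈ uIcc (0:ℝ) a, HasDerivAt (fun x : ℝ => 1/2 * Real.log (1+x^2)) (g x) x := by
      intro x _
      have h1 : HasDerivAt (fun x : ℝ => 1+x^2) (2*x) x := by
        simpa using (hasDerivAt_pow 2 x).const_add 1
      have h2 := (h1.log (by positivity : (1:ℝ)+x^2 ≠ 0)).const_mul (1/2:ℝ)
      refine h2.congr_deriv ?_
      simp only [hg_def]
      field_simp
    rw [intervalIntegral.integral_eq_sub_of_hasDerivAt hD (contg.intervalIntegrable 0 a)]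
    rw [ha2]
    norm_num
  -- bound 1
  have hkey1 : ∀ r ∈ Ioc (0:ℝ) a, |H r - h₀ r| ≤ r/(4*t) := by
    intro r hr
    have hr0 : (0:ℝ) < r := hr.1
    have hpow : r^n ≤ Real.sqrt (1+r^2)^n := pow_le_pow_left₀ hr0.le (hrs r hr0.le) n
    have h1 : r^(n-1) * (Real.sqrt (1+r^2)^n)⁻¹ ≤ 1/r := by
      calc r^(n-1) * (Real.sqrt (1+r^2)^n)⁻¹ ≤ r^(n-1) * (r^n)⁻¹ := by
            gcongr
        _ = 1/r := by
            rw [show r^n = r^(n-1) * r by rw [← pow_succ]; congr 1; omega]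
            field_simp
    have hexp1 : Real.exp (-r^2/(4*t)) ≤ 1 := by
      rw [Real.exp_le_one_iff, neg_div]
      exact neg_nonpos.mpr (by positivity)
    have hexp2 : 1 - Real.exp (-r^2/(4*t)) ≤ r^2/(4*t) := by
      have := Real.add_one_le_exp (-(r^2/(4*t)))
      rw [neg_div]
      linarith
    have e : H r - h₀ r
        = -((r^(n-1) * (Real.sqrt (1+r^2)^n)⁻¹) * (1 - Real.exp (-r^2/(4*t)))) := by
      simp only [hH_def, hh0_def]; ring
    rw [e, abs_neg, abs_of_nonneg (mul_nonneg (by positivity) (by linarith))]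
    calc (r^(n-1) * (Real.sqrt (1+r^2)^n)⁻¹) * (1 - Real.exp (-r^2/(4*t)))
        ≤ (1/r) * (r^2/(4*t)) := by
          apply mul_le_mul h1 hexp2 (by linarith) (by positivity)
      _ = r/(4*t) := by field_simp
  have hIb1 : IntegrableOn (fun r : ℝ => r/(4*t)) (Ioc 0 a) :=
    (continuous_id.div_const (4*t)).integrableOn_Ioc
  have hb1 : |∫ r in Ioc (0:ℝ) a, (H r - h₀ r)| ≤ 1/8 := by
    have step : |∫ r in Ioc (0:ℝ) a, (H r - h₀ r)| ≤ ∫ r in Ioc (0:ℝ) a, r/(4*t) := by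
      rw [← Real.norm_eq_abs]
      apply norm_integral_le_of_norm_le hIb1
      filter_upwards [ae_restrict_mem measurableSet_Ioc] with r hr
      rw [Real.norm_eq_abs]
      exact hkey1 r hr
    have hval : (∫ r in Ioc (0:ℝ) a, r/(4*t)) = 1/8 := by
      rw [← intervalIntegral.integral_of_le ha0.le, intervalIntegral.integral_div,
        integral_id, ha2]
      field_simp
      ring
    linarith [step, hval.le, hval.ge]
  -- bound 2
  have intA : IntegrableOn (fun r : ℝ => (n:ℝ)/(1+r^2)) (Ioi 0) := by
    have : (fun r : ℝ => (n:ℝ)/(1+r^2)) = fun r : ℝ => (n:ℝ) * (1+r^2)⁻¹ := by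
      funext r; rw [div_eq_mul_inv]
    rw [this]
    exact (integrable_inv_one_add_sq.const_mul _).integrableOn
  have hb2 : |∫ r in Ioc (0:ℝ) a, (h₀ r - g r)| ≤ ∫ r in Ioi (0:ℝ), (n:ℝ)/(1+r^2) := by
    have step : |∫ r in Ioc (0:ℝ) a, (h₀ r - g r)| ≤ ∫ r in Ioc (0:ℝ) a, (n:ℝ)/(1+r^2) := by
      rw [← Real.norm_eq_abs]
      apply norm_integral_le_of_norm_le (intA.mono_set Ioc_subset_Ioi_self)
      filter_upwards [ae_restrict_mem measurableSet_Ioc] with r hr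
      rw [Real.norm_eq_abs, abs_sub_comm]
      have := aux_pointwise n hn hr.1.le
      simpa [hg_def, hh0_def, div_eq_mul_inv] using this
    refine step.trans (setIntegral_mono_set intA ?_ ?_)
    · filter_upwards with r using by positivity
    · exact HasSubset.Subset.eventuallyLE Ioc_subset_Ioi_self
  -- bound 3
  have intphi : IntegrableOn (fun r : ℝ => r/t * Real.exp (-r^2/(4*t))) (Ioi a) := by
    have base := integrable_mul_exp_neg_mul_sq hb
    have e : (fun r : ℝ => r/t * Real.exp (-r^2/(4*t)))
        = fun r : ℝ => (1/t) * (r * Real.exp (-(1/(4*t)) * r^2)) := by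
      funext r
      rw [show -(1/(4*t)) * r^2 = -r^2/(4*t) by ring]
      ring
    rw [e]
    exact (base.const_mul _).integrableOn
  have hval3 : (∫ r in Ioi a, r/t * Real.exp (-r^2/(4*t))) = 2 * Real.exp (-(1/4 : ℝ)) := by
    have hderiv : ∀ x ∈ Ioi a, HasDerivAt (fun r : ℝ => -2 * Real.exp (-r^2/(4*t)))
        (x/t * Real.exp (-x^2/(4*t))) x := by
      intro x _
      have h1 : HasDerivAt (fun r : ℝ => -r^2/(4*t)) (-2*x/(4*t)) x := by
        have := ((hasDerivAt_pow 2 x).neg).div_const (4*t)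
        simpa [neg_div] using this
      have h2 := (h1.exp).const_mul (-2 : ℝ)
      refine h2.congr_deriv ?_
      field_simp
      ring
    have htend : Filter.Tendsto (fun r : ℝ => -2 * Real.exp (-r^2/(4*t)))
        Filter.atTop (nhds 0) := by
      have h2 : Filter.Tendsto (fun r : ℝ => r^2/(4*t)) Filter.atTop Filter.atTop :=
        Filter.Tendsto.atTop_div_const (by positivity) (Filter.tendsto_pow_atTop two_ne_zero)
      have h3 : Filter.Tendsto (fun r : ℝ => -r^2/(4*t)) Filter.atTop Filter.atBot := by
        simp only [neg_div]
        exact Filter.tendsto_neg_atBot_iff.mpr h2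
      have h4 := (Real.tendsto_exp_atBot.comp h3).const_mul (-2 : ℝ)
      simpa using h4
    have := integral_Ioi_of_hasDerivAt_of_tendsto
      ((continuous_const.mul contexp).continuousWithinAt) hderiv intphi htend
    rw [this]
    simp only [Pi.mul_apply]
    rw [show -a^2/(4*t) = -(1/4 : ℝ) by
      rw [ha2, div_eq_iff (by positivity : (0:ℝ) < 4*t).ne']; ring]
    ring
  have hb3 : |∫ r in Ioi a, H r| ≤ 2 := by
    have step : |∫ r in Ioi a, H r| ≤ ∫ r in Ioi a, r/t * Real.exp (-r^2/(4*t)) := by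
      rw [← Real.norm_eq_abs]
      apply norm_integral_le_of_norm_le intphi
      filter_upwards [ae_restrict_mem measurableSet_Ioi] with r hr
      have hr0 : (0:ℝ) < r := lt_trans ha0 hr
      have hra : a ≤ r := le_of_lt hr
      have hpow : r^n ≤ Real.sqrt (1+r^2)^n := pow_le_pow_left₀ hr0.le (hrs r hr0.le) n
      have h1 : r^(n-1) * (Real.sqrt (1+r^2)^n)⁻¹ ≤ 1/r := by
        calc r^(n-1) * (Real.sqrt (1+r^2)^n)⁻¹ ≤ r^(n-1) * (r^n)⁻¹ := by
              gcongr
          _ = 1/r := by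
              rw [show r^n = r^(n-1) * r by rw [← pow_succ]; congr 1; omega]
              field_simp
      have h2 : 1/r ≤ r/t := by
        rw [div_le_div_iff₀ hr0 ht0]
        nlinarith [pow_le_pow_left₀ ha0.le hra 2]
      rw [Real.norm_eq_abs, abs_of_nonneg (by positivity : (0:ℝ) ≤ H r)]
      calc H r = (r^(n-1) * (Real.sqrt (1+r^2)^n)⁻¹) * Real.exp (-r^2/(4*t)) := by
            simp only [hH_def]; ring
        _ ≤ (r/t) * Real.exp (-r^2/(4*t)) := by
            apply mul_le_mul_of_nonneg_right (h1.trans h2) (Real.exp_nonneg _)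
        _ = r/t * Real.exp (-r^2/(4*t)) := by ring
    rw [hval3] at step
    have : Real.exp (-(1/4:ℝ)) ≤ 1 := by
      rw [Real.exp_le_one_iff]; norm_num
    linarith
  -- assemble
  have hA0 : (0:ℝ) ≤ ∫ r in Ioi (0:ℝ), (n:ℝ)/(1+r^2) :=
    setIntegral_nonneg measurableSet_Ioi (fun r _ => by positivity)
  calc |(∫ r in Ioi (0:ℝ), H r) - 1/2 * Real.log (1+t)|
      = |(∫ r in Ioc (0:ℝ) a, (H r - h₀ r)) + (∫ r in Ioc (0:ℝ) a, (h₀ r - g r))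
          + (∫ r in Ioi a, H r)| := by
        rw [hsplit, ← hlog, integral_sub intH_Ioc inth0_Ioc, integral_sub inth0_Ioc intg_Ioc]
        congr 1
        ring
    _ ≤ |∫ r in Ioc (0:ℝ) a, (H r - h₀ r)| + |∫ r in Ioc (0:ℝ) a, (h₀ r - g r)|
          + |∫ r in Ioi a, H r| :=
        (abs_add_le _ _).trans (add_le_add_left (abs_add_le _ _) _)
    _ ≤ 1/8 + (∫ r in Ioi (0:ℝ), (n:ℝ)/(1+r^2)) + 2 := add_le_add (add_le_add hb1 hb2) hb3
    _ ≤ (∫ r in Ioi (0:ℝ), (n:ℝ)/(1+r^2)) + 3 := by linarith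

/-- The surface measure of the unit sphere `S^{n-1}` in `ℝⁿ`. -/
noncomputable def sphereMeasure (n : ℕ) : ℝ :=
  (n : ℝ) * (volume (Metric.ball (0 : EuclideanSpace ℝ (Fin n)) 1)).toReal

theorem heat_kernel_expansion_critical (n : ℕ) (hn : 0 < n) :
    ∃ C > 0, ∀ t ≥ (1 : ℝ),
      |(4 * π * t) ^ (-(n : ℝ) / 2)
          * (∫ y : EuclideanSpace ℝ (Fin n),
              Real.exp (-‖y‖ ^ 2 / (4 * t)) * Real.sqrt (1 + ‖y‖ ^ 2) ^ (-(n : ℝ)))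
        - (4 * π) ^ (-(n : ℝ) / 2) * (1 / 2) * sphereMeasure n
          * t ^ (-(n : ℝ) / 2) * Real.log (1 + t)|
      ≤ C * t ^ (-(n : ℝ) / 2) := by
  haveI : Nontrivial (EuclideanSpace ℝ (Fin n)) := by
    apply Module.nontrivial_of_finrank_pos (R := ℝ)
    rw [finrank_euclideanSpace_fin]
    exact hn
  have hvol_pos : 0 < (volume (Metric.ball (0 : EuclideanSpace ℝ (Fin n)) 1)).toReal := by
    apply ENNReal.toReal_pos
    · exact (Metric.measure_ball_pos volume 0 one_pos).ne'
    · exact measure_ball_lt_top.ne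
  have hS : 0 < sphereMeasure n := mul_pos (Nat.cast_pos.mpr hn) hvol_pos
  set A := ∫ r in Ioi (0:ℝ), (n:ℝ)/(1+r^2) with hA_def
  have hA0 : 0 ≤ A := setIntegral_nonneg measurableSet_Ioi fun r _ => by positivity
  have h4π : (0:ℝ) < 4*π := by positivity
  have hP : (0:ℝ) < (4*π) ^ (-(n:ℝ)/2) := Real.rpow_pos_of_pos h4π _
  refine ⟨(4*π) ^ (-(n:ℝ)/2) * sphereMeasure n * (A + 3),
    by positivity, fun t ht => ?_⟩
  have ht0 : (0:ℝ) < t := lt_of_lt_of_le one_pos ht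
  have hT : (0:ℝ) < t ^ (-(n:ℝ)/2) := Real.rpow_pos_of_pos ht0 _
  have hrw : ∀ r : ℝ, Real.sqrt (1+r^2) ^ (-(n:ℝ)) = (Real.sqrt (1+r^2) ^ n)⁻¹ := fun r => by
    rw [Real.rpow_neg (Real.sqrt_nonneg _), Real.rpow_natCast]
  have hpolar := integral_fun_norm_addHaar (volume : Measure (EuclideanSpace ℝ (Fin n)))
    (fun r : ℝ => Real.exp (-r^2/(4*t)) * Real.sqrt (1+r^2) ^ (-(n:ℝ)))
  simp only [finrank_euclideanSpace_fin, nsmul_eq_mul, smul_eq_mul] at hpolar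
  rw [hpolar]
  simp only [hrw]
  set I := ∫ r in Ioi (0:ℝ), r ^ (n-1) * (Real.exp (-r^2/(4*t)) * (Real.sqrt (1+r^2) ^ n)⁻¹)
    with hI_def
  have core := aux_core n hn ht
  rw [← hI_def] at core
  have hmulpow : (4*π*t) ^ (-(n:ℝ)/2) = (4*π) ^ (-(n:ℝ)/2) * t ^ (-(n:ℝ)/2) :=
    Real.mul_rpow h4π.le ht0.le
  have hfold : (n:ℝ) * (volume.real (Metric.ball (0 : EuclideanSpace ℝ (Fin n)) 1) * I)
      = sphereMeasure n * I := by
    rw [sphereMeasure, measureReal_def]; ring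
  rw [hmulpow, hfold]
  have hfac : (4*π) ^ (-(n:ℝ)/2) * t ^ (-(n:ℝ)/2) * (sphereMeasure n * I)
        - (4*π) ^ (-(n:ℝ)/2) * (1/2) * sphereMeasure n * t ^ (-(n:ℝ)/2) * Real.log (1+t)
      = ((4*π) ^ (-(n:ℝ)/2) * sphereMeasure n * t ^ (-(n:ℝ)/2))
        * (I - 1/2 * Real.log (1+t)) := by ring
  rw [hfac, abs_mul, abs_of_pos (by positivity)]
  calc ((4*π) ^ (-(n:ℝ)/2) * sphereMeasure n * t ^ (-(n:ℝ)/2)) * |I - 1/2 * Real.log (1+t)|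
      ≤ ((4*π) ^ (-(n:ℝ)/2) * sphereMeasure n * t ^ (-(n:ℝ)/2)) * (A + 3) :=
        mul_le_mul_of_nonneg_left core (by positivity)
    _ = (4*π) ^ (-(n:ℝ)/2) * sphereMeasure n * (A + 3) * t ^ (-(n:ℝ)/2) := by ring
end

section
/- For n > 0 and γ > n, there exists C > 0 such that for all t ≥ 1, | (4πt)^(-n/2) ∫_{ℝⁿ} e^(-|y|²/(4t)) ⟨y⟩^(-γ) dy − t^(-n/2) (4π)^(-n/2) ∫_{ℝⁿ} ⟨y⟩^(-γ) dy | ≤ C t^(-n/2) h(t), where h(t) = t^((n−γ)/2) if n < γ < n+2, h(t) = t^(-1)(1 + ln t) if γ = n+2, and h(t) = t^(-1) if γ > n+2. -/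
open MeasureTheory Real
open Set in
lemma key_oned (n : ℕ) (hn : 0 < n) (γ : ℝ) (hγ : (n : ℝ) < γ) :
    ∃ K > 0, ∀ t ≥ (1:ℝ),
      (∫ r in Ioi (0:ℝ), r ^ (n-1) * ((1 - Real.exp (-r^2/(4*t))) * Real.sqrt (1+r^2) ^ (-γ)))
      ≤ K * (if γ < (n : ℝ) + 2 then t ^ (((n : ℝ) - γ) / 2)
          else if γ = (n : ℝ) + 2 then t⁻¹ * (1 + Real.log t)
          else t⁻¹) := by
  classical
  -- weight function
  set w : ℝ → ℝ := fun r => Real.sqrt (1 + r^2) ^ (-γ) with hw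
  have hwcont : Continuous w := by
    apply Continuous.rpow_const
    · exact (continuous_const.add (continuous_pow 2)).sqrt
    · intro r; left
      positivity
  have hw_nonneg : ∀ r, 0 ≤ w r := fun r => rpow_nonneg (Real.sqrt_nonneg _) _
  have hw_le_one : ∀ r, w r ≤ 1 := by
    intro r
    apply Real.rpow_le_one_of_one_le_of_nonpos
    · exact Real.one_le_sqrt.mpr (by nlinarith [sq_nonneg r])
    · linarith [hγ, Nat.cast_nonneg (α := ℝ) n]
  have hγ0 : 0 < γ := lt_of_le_of_lt (Nat.cast_nonneg n) hγ
  have hw_le : ∀ r : ℝ, 1 ≤ r → w r ≤ r ^ (-γ) := by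
    intro r hr
    apply Real.rpow_le_rpow_of_nonpos (by linarith) _ (by linarith)
    exact (Real.le_sqrt (by linarith) (by positivity)).mpr (by linarith)
  -- master estimate
  have master : ∀ t : ℝ, 1 ≤ t →
      (∫ r in Ioi (0:ℝ), r ^ (n-1) * ((1 - Real.exp (-r^2/(4*t))) * w r))
      ≤ 1/(4*t) * (1 + ∫ r in Ioc (1:ℝ) (Real.sqrt t), r ^ ((n:ℝ)+1-γ))
          + (Real.sqrt t) ^ ((n:ℝ)-γ) / (γ - (n:ℝ)) := by
    intro t ht
    have ht0 : (0:ℝ) < t := by linarith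
    set s := Real.sqrt t with hs
    have hs1 : 1 ≤ s := Real.one_le_sqrt.mpr ht
    have hs0 : (0:ℝ) < s := by linarith
    have hss : s ^ 2 = t := Real.sq_sqrt ht0.le
    set φ : ℝ → ℝ := fun r => r ^ (n-1) * ((1 - Real.exp (-r^2/(4*t))) * w r) with hφ
    have hφcont : Continuous φ := by
      apply (continuous_pow _).mul
      exact ((continuous_const.sub (((continuous_pow 2).neg.div_const _).rexp)).mul hwcont)
    have hexp_le_one : ∀ r : ℝ, Real.exp (-r^2/(4*t)) ≤ 1 := by
      intro r
      apply Real.exp_le_one_iff.mpr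
      rw [neg_div, neg_nonpos]
      positivity
    have hφ_nonneg : ∀ r : ℝ, 0 ≤ r → 0 ≤ φ r := by
      intro r hr
      apply mul_nonneg (pow_nonneg hr _)
      exact mul_nonneg (by linarith [hexp_le_one r]) (hw_nonneg r)
    -- tail bound pointwise
    have bound2 : ∀ r ∈ Ioi s, φ r ≤ r ^ ((n:ℝ)-1-γ) := by
      intro r hr
      have hr1 : 1 ≤ r := le_trans hs1 (le_of_lt hr)
      have hr0 : (0:ℝ) < r := by linarith
      have h1 : φ r ≤ r ^ (n-1) * w r := by
        apply mul_le_mul_of_nonneg_left _ (pow_nonneg hr0.le _)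
        have := hexp_le_one r
        nlinarith [hw_nonneg r, Real.exp_pos (-r^2/(4*t)), hw_le_one r]
      refine h1.trans ?_
      have h2 : r ^ (n-1) * w r ≤ r ^ (n-1) * r ^ (-γ) :=
        mul_le_mul_of_nonneg_left (hw_le r hr1) (pow_nonneg hr0.le _)
      refine h2.trans_eq ?_
      rw [← Real.rpow_natCast r (n-1), ← Real.rpow_add hr0]
      congr 1
      push_cast [Nat.cast_sub hn]
      ring
    have Itail_pow : IntegrableOn (fun r : ℝ => r ^ ((n:ℝ)-1-γ)) (Ioi s) :=
      integrableOn_Ioi_rpow_of_lt (by linarith) hs0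
    have I2 : IntegrableOn φ (Ioi s) := by
      apply Itail_pow.mono' (hφcont.aestronglyMeasurable.restrict)
      filter_upwards [ae_restrict_mem measurableSet_Ioi] with r hr
      rw [Real.norm_eq_abs, abs_of_nonneg (hφ_nonneg r (by exact le_trans (by linarith) (le_of_lt hr)))]
      exact bound2 r hr
    have I1 : IntegrableOn φ (Ioc 0 s) := hφcont.integrableOn_Ioc
    -- split
    have hsplit : (∫ r in Ioi (0:ℝ), φ r) = (∫ r in Ioc 0 s, φ r) + ∫ r in Ioi s, φ r := by
      rw [← Ioc_union_Ioi_eq_Ioi hs0.le]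
      exact setIntegral_union (Ioc_disjoint_Ioi le_rfl) measurableSet_Ioi I1 I2
    -- tail piece
    have tail_le : (∫ r in Ioi s, φ r) ≤ s ^ ((n:ℝ)-γ) / (γ - (n:ℝ)) := by
      have := setIntegral_mono_on I2 Itail_pow measurableSet_Ioi bound2
      refine this.trans_eq ?_
      rw [integral_Ioi_rpow_of_lt (by linarith) hs0]
      rw [show (n:ℝ)-1-γ+1 = (n:ℝ)-γ by ring]
      rw [neg_div, ← div_neg]
      ring_nf
    -- ball piece
    have ball_le : (∫ r in Ioc 0 s, φ r)
        ≤ 1/(4*t) * (1 + ∫ r in Ioc (1:ℝ) s, r ^ ((n:ℝ)+1-γ)) := by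
      set ψ : ℝ → ℝ := fun r => 1/(4*t) * (r ^ (n+1) * w r) with hψ
      have hψcont : Continuous ψ := continuous_const.mul ((continuous_pow _).mul hwcont)
      have step1 : (∫ r in Ioc 0 s, φ r) ≤ ∫ r in Ioc 0 s, ψ r := by
        apply setIntegral_mono_on I1 hψcont.integrableOn_Ioc measurableSet_Ioc
        intro r hr
        have hr0 : 0 < r := hr.1
        have hexp : 1 - Real.exp (-r^2/(4*t)) ≤ r^2/(4*t) := by
          have := Real.add_one_le_exp (-r^2/(4*t))
          have h2 : -(r^2/(4*t)) + 1 ≤ Real.exp (-r^2/(4*t)) := by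
            rw [neg_div] at this ⊢; linarith
          linarith
        have : φ r ≤ r ^ (n-1) * (r^2/(4*t) * w r) := by
          apply mul_le_mul_of_nonneg_left _ (pow_nonneg hr0.le _)
          exact mul_le_mul_of_nonneg_right hexp (hw_nonneg r)
        refine this.trans_eq ?_
        simp only [hψ]
        rw [show n + 1 = (n-1) + 2 from by omega, pow_add]
        ring
      refine step1.trans ?_
      have hsplit2 : (∫ r in Ioc (0:ℝ) s, ψ r)
          = (∫ r in Ioc (0:ℝ) 1, ψ r) + ∫ r in Ioc (1:ℝ) s, ψ r := by
        rw [← Ioc_union_Ioc_eq_Ioc (zero_le_one) hs1]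
        exact setIntegral_union (Ioc_disjoint_Ioc_of_le le_rfl) measurableSet_Ioc
          hψcont.integrableOn_Ioc hψcont.integrableOn_Ioc
      rw [hsplit2, mul_add, mul_one]
      gcongr
      · -- ∫ Ioc 0 1 ψ ≤ 1/(4t)
        have : (∫ r in Ioc (0:ℝ) 1, ψ r) ≤ ∫ _ in Ioc (0:ℝ) 1, 1/(4*t) := by
          apply setIntegral_mono_on hψcont.integrableOn_Ioc ((integrableOn_const_iff).mpr (by right; simp)) measurableSet_Ioc
          intro r hr
          simp only [hψ]
          have h1 : r ^ (n+1) * w r ≤ 1 := by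
            have := hw_le_one r
            have := hw_nonneg r
            have hr1 : r ^ (n+1) ≤ 1 := pow_le_one₀ hr.1.le hr.2
            nlinarith [pow_nonneg hr.1.le (n+1)]
          have h4 : (0:ℝ) < 1/(4*t) := by positivity
          nlinarith [h4]
        refine this.trans_eq ?_
        simp [Real.volume_Ioc]
      · -- ∫ Ioc 1 s ψ ≤ 1/(4t) * ∫ r^(n+1-γ)
        rw [show (∫ r in Ioc (1:ℝ) s, ψ r) = 1/(4*t) * ∫ r in Ioc (1:ℝ) s, r ^ (n+1) * w r from integral_const_mul _ _]
        gcongr 1/(4*t) * ?_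
        have hIrpow : IntegrableOn (fun r : ℝ => r ^ ((n:ℝ)+1-γ)) (Ioc (1:ℝ) s) := by
          apply (ContinuousOn.integrableOn_Icc ?_).mono_set Ioc_subset_Icc_self
          exact ContinuousOn.rpow_const continuousOn_id
            (fun x hx => Or.inl (by intro h; rw [h] at hx; exact absurd hx.1 (by norm_num)))
        apply setIntegral_mono_on ((continuous_pow _).mul hwcont).integrableOn_Ioc hIrpow measurableSet_Ioc
        intro r hr
        have hr1 : 1 ≤ r := hr.1.le
        have hr0 : (0:ℝ) < r := by linarith
        calc r ^ (n+1) * w r ≤ r ^ (n+1) * r ^ (-γ) :=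
              mul_le_mul_of_nonneg_left (hw_le r hr1) (pow_nonneg hr0.le _)
          _ = r ^ ((n:ℝ)+1-γ) := by
              rw [← Real.rpow_natCast r (n+1), ← Real.rpow_add hr0]
              congr 1; push_cast; ring
    rw [hsplit]
    exact add_le_add ball_le tail_le
  -- now the case analysis
  have hsp : ∀ t : ℝ, 0 < t → ∀ a : ℝ, (Real.sqrt t) ^ a = t ^ (a/2) := by
    intro t ht0 a
    rw [Real.sqrt_eq_rpow, ← Real.rpow_mul ht0.le]
    congr 1; ring
  rcases lt_trichotomy γ ((n:ℝ)+2) with hcase | hcase | hcase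
  · -- subcritical exponent: γ < n + 2
    refine ⟨1/4 + 1/4 * (1/((n:ℝ)+2-γ)) + 1/(γ-(n:ℝ)), by
      have h1 : (0:ℝ) < (n:ℝ)+2-γ := by linarith
      have h2 : (0:ℝ) < γ-(n:ℝ) := by linarith
      positivity, ?_⟩
    intro t ht
    have ht0 : (0:ℝ) < t := by linarith
    have hs1 : 1 ≤ Real.sqrt t := Real.one_le_sqrt.mpr ht
    simp only [if_pos hcase]
    refine (master t ht).trans ?_
    set p := t ^ (((n:ℝ)-γ)/2) with hp
    have hp0 : 0 < p := Real.rpow_pos_of_pos ht0 _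
    have hc : (0:ℝ) < (n:ℝ)+2-γ := by linarith
    have e1 : t⁻¹ ≤ p := by
      rw [← Real.rpow_neg_one t]
      exact Real.rpow_le_rpow_of_exponent_le ht (by linarith)
    have e2 : t⁻¹ * t ^ (((n:ℝ)+2-γ)/2) = p := by
      rw [← Real.rpow_neg_one t, ← Real.rpow_add ht0, hp]
      congr 1; ring
    have hM : (∫ r in Ioc (1:ℝ) (Real.sqrt t), r ^ ((n:ℝ)+1-γ))
        ≤ t ^ (((n:ℝ)+2-γ)/2) / ((n:ℝ)+2-γ) := by
      rw [← intervalIntegral.integral_of_le hs1,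
        integral_rpow (Or.inl (by linarith : (-1:ℝ) < (n:ℝ)+1-γ))]
      rw [Real.one_rpow, show (n:ℝ)+1-γ+1 = (n:ℝ)+2-γ by ring, hsp t ht0]
      gcongr
      linarith
    have hball : 1/(4*t) * (1 + ∫ r in Ioc (1:ℝ) (Real.sqrt t), r ^ ((n:ℝ)+1-γ))
        ≤ 1/4 * (p + p / ((n:ℝ)+2-γ)) := by
      rw [show (1:ℝ)/(4*t) * (1 + ∫ r in Ioc (1:ℝ) (Real.sqrt t), r ^ ((n:ℝ)+1-γ))
          = 1/4 * (t⁻¹ + t⁻¹ * ∫ r in Ioc (1:ℝ) (Real.sqrt t), r ^ ((n:ℝ)+1-γ)) from by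
        field_simp]
      have hB : t⁻¹ * (∫ r in Ioc (1:ℝ) (Real.sqrt t), r ^ ((n:ℝ)+1-γ)) ≤ p / ((n:ℝ)+2-γ) := by
        calc t⁻¹ * ∫ r in Ioc (1:ℝ) (Real.sqrt t), r ^ ((n:ℝ)+1-γ)
            ≤ t⁻¹ * (t ^ (((n:ℝ)+2-γ)/2) / ((n:ℝ)+2-γ)) :=
              mul_le_mul_of_nonneg_left hM (inv_nonneg.mpr ht0.le)
          _ = p / ((n:ℝ)+2-γ) := by rw [← e2]; ring
      exact mul_le_mul_of_nonneg_left (add_le_add e1 hB) (by norm_num)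
    have htail : (Real.sqrt t) ^ ((n:ℝ)-γ) / (γ-(n:ℝ)) = p / (γ-(n:ℝ)) := by
      rw [hsp t ht0]
    rw [htail]
    calc 1/(4*t) * (1 + ∫ r in Ioc (1:ℝ) (Real.sqrt t), r ^ ((n:ℝ)+1-γ)) + p / (γ-(n:ℝ))
        ≤ 1/4 * (p + p / ((n:ℝ)+2-γ)) + p / (γ-(n:ℝ)) := by linarith
      _ = (1/4 + 1/4 * (1/((n:ℝ)+2-γ)) + 1/(γ-(n:ℝ))) * p := by ring
  · -- critical exponent: γ = n + 2
    refine ⟨1, one_pos, ?_⟩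
    intro t ht
    have ht0 : (0:ℝ) < t := by linarith
    have hs1 : 1 ≤ Real.sqrt t := Real.one_le_sqrt.mpr ht
    have hs0 : (0:ℝ) < Real.sqrt t := by linarith
    simp only [if_neg (by linarith : ¬ γ < (n:ℝ)+2), if_pos hcase]
    refine (master t ht).trans ?_
    have hM : (∫ r in Ioc (1:ℝ) (Real.sqrt t), r ^ ((n:ℝ)+1-γ)) = Real.log t / 2 := by
      rw [show (n:ℝ)+1-γ = -1 from by rw [hcase]; ring]
      simp only [Real.rpow_neg_one]
      rw [← intervalIntegral.integral_of_le hs1,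
        integral_inv (Set.notMem_uIcc_of_lt zero_lt_one hs0),
        div_one, Real.log_sqrt ht0.le]
    have htail : (Real.sqrt t) ^ ((n:ℝ)-γ) / (γ-(n:ℝ)) = t⁻¹ / 2 := by
      rw [hsp t ht0, show ((n:ℝ)-γ)/2 = -1 from by rw [hcase]; ring,
        Real.rpow_neg_one, show γ-(n:ℝ) = 2 from by rw [hcase]; ring]
    rw [hM, htail]
    have hu0 : (0:ℝ) < t⁻¹ := inv_pos.mpr ht0
    have hL : 0 ≤ Real.log t := Real.log_nonneg ht
    have h14 : 1/(4*t) = t⁻¹/4 := by field_simp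
    rw [h14]
    have huL : 0 ≤ t⁻¹ * Real.log t := mul_nonneg hu0.le hL
    nlinarith [hu0, hL, huL]
  · -- supercritical exponent: γ > n + 2
    refine ⟨1/4 * (1 + 1/(γ-(n:ℝ)-2)) + 1/(γ-(n:ℝ)), by
      have h1 : (0:ℝ) < γ-(n:ℝ)-2 := by linarith
      have h2 : (0:ℝ) < γ-(n:ℝ) := by linarith
      positivity, ?_⟩
    intro t ht
    have ht0 : (0:ℝ) < t := by linarith
    have hs1 : 1 ≤ Real.sqrt t := Real.one_le_sqrt.mpr ht
    have hs0 : (0:ℝ) < Real.sqrt t := by linarith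
    simp only [if_neg (by linarith : ¬ γ < (n:ℝ)+2), if_neg (by linarith : ¬ γ = (n:ℝ)+2)]
    refine (master t ht).trans ?_
    have hu0 : (0:ℝ) < t⁻¹ := inv_pos.mpr ht0
    have hgn2 : (0:ℝ) < γ-(n:ℝ)-2 := by linarith
    have hgn : (0:ℝ) < γ-(n:ℝ) := by linarith
    have hint : IntegrableOn (fun r:ℝ => r ^ ((n:ℝ)+1-γ)) (Ioi (1:ℝ)) :=
      integrableOn_Ioi_rpow_of_lt (by linarith) one_pos
    have hM : (∫ r in Ioc (1:ℝ) (Real.sqrt t), r ^ ((n:ℝ)+1-γ)) ≤ 1/(γ-(n:ℝ)-2) := by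
      have h1 : (∫ r in Ioc (1:ℝ) (Real.sqrt t), r ^ ((n:ℝ)+1-γ))
          ≤ ∫ r in Ioi (1:ℝ), r ^ ((n:ℝ)+1-γ) := by
        apply setIntegral_mono_set hint
        · filter_upwards [ae_restrict_mem measurableSet_Ioi] with r hr
          exact Real.rpow_nonneg (by linarith [hr.out] : (0:ℝ) ≤ r) _
        · exact HasSubset.Subset.eventuallyLE Ioc_subset_Ioi_self
      rw [integral_Ioi_rpow_of_lt (by linarith) one_pos, Real.one_rpow] at h1
      refine h1.trans_eq ?_
      rw [show (n:ℝ)+1-γ+1 = -(γ-(n:ℝ)-2) from by ring, div_neg, ← neg_div, neg_neg]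
    have hM0 : (0:ℝ) ≤ ∫ r in Ioc (1:ℝ) (Real.sqrt t), r ^ ((n:ℝ)+1-γ) := by
      apply setIntegral_nonneg measurableSet_Ioc
      intro r hr
      exact Real.rpow_nonneg (by linarith [hr.1] : (0:ℝ) ≤ r) _
    have htail : (Real.sqrt t) ^ ((n:ℝ)-γ) ≤ t⁻¹ := by
      rw [hsp t ht0, ← Real.rpow_neg_one t]
      exact Real.rpow_le_rpow_of_exponent_le ht (by linarith)
    have h14 : 1/(4*t) = t⁻¹/4 := by field_simp
    calc 1/(4*t) * (1 + ∫ r in Ioc (1:ℝ) (Real.sqrt t), r ^ ((n:ℝ)+1-γ))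
          + (Real.sqrt t) ^ ((n:ℝ)-γ) / (γ-(n:ℝ))
        ≤ t⁻¹/4 * (1 + 1/(γ-(n:ℝ)-2)) + t⁻¹ / (γ-(n:ℝ)) := by
          rw [h14]
          gcongr
        _ = (1/4 * (1 + 1/(γ-(n:ℝ)-2)) + 1/(γ-(n:ℝ))) * t⁻¹ := by ring


open Set Metric in

theorem heat_kernel_expansion_supercritical (n : ℕ) (hn : 0 < n) (γ : ℝ) (hγ : (n : ℝ) < γ) :
    ∃ C > 0, ∀ t ≥ (1 : ℝ),
      |(4 * π * t) ^ (-(n : ℝ) / 2)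
          * (∫ y : EuclideanSpace ℝ (Fin n),
              Real.exp (-‖y‖ ^ 2 / (4 * t)) * Real.sqrt (1 + ‖y‖ ^ 2) ^ (-γ))
        - t ^ (-(n : ℝ) / 2) * (4 * π) ^ (-(n : ℝ) / 2)
          * ∫ y : EuclideanSpace ℝ (Fin n), Real.sqrt (1 + ‖y‖ ^ 2) ^ (-γ)|
      ≤ C * t ^ (-(n : ℝ) / 2) *
        (if γ < (n : ℝ) + 2 then t ^ (((n : ℝ) - γ) / 2)
          else if γ = (n : ℝ) + 2 then t⁻¹ * (1 + Real.log t)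
          else t⁻¹) := by
  obtain ⟨K, hK, hkey⟩ := key_oned n hn γ hγ
  haveI : Nonempty (Fin n) := Fin.pos_iff_nonempty.mp hn
  set V : ℝ := (volume (Metric.ball (0:EuclideanSpace ℝ (Fin n)) 1)).toReal with hV
  have hV0 : 0 < V :=
    ENNReal.toReal_pos (ne_of_gt (Metric.measure_ball_pos _ _ one_pos)) measure_ball_lt_top.ne
  have hπ : (0:ℝ) < 4 * π := by positivity
  set c : ℝ := (4*π) ^ (-(n:ℝ)/2) with hc
  have hc0 : 0 < c := Real.rpow_pos_of_pos hπ _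
  refine ⟨c * ((n:ℝ) * V) * K, by positivity, ?_⟩
  intro t ht
  have ht0 : (0:ℝ) < t := by linarith
  have htp : (0:ℝ) < t ^ (-(n:ℝ)/2) := Real.rpow_pos_of_pos ht0 _
  -- weight continuity
  have hwcont : Continuous fun y : EuclideanSpace ℝ (Fin n) => Real.sqrt (1 + ‖y‖^2) ^ (-γ) := by
    apply Continuous.rpow_const
    · exact (continuous_const.add ((continuous_norm).pow 2)).sqrt
    · intro y; left; positivity
  have hw_nonneg : ∀ y : EuclideanSpace ℝ (Fin n), 0 ≤ Real.sqrt (1 + ‖y‖^2) ^ (-γ) :=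
    fun y => Real.rpow_nonneg (Real.sqrt_nonneg _) _
  have hexp_mem : ∀ y : EuclideanSpace ℝ (Fin n), 0 < Real.exp (-‖y‖^2/(4*t))
      ∧ Real.exp (-‖y‖^2/(4*t)) ≤ 1 := by
    intro y
    refine ⟨Real.exp_pos _, Real.exp_le_one_iff.mpr ?_⟩
    rw [neg_div, neg_nonpos]
    positivity
  -- integrability
  have hgint : Integrable (fun y : EuclideanSpace ℝ (Fin n) => Real.sqrt (1 + ‖y‖^2) ^ (-γ)) := by
    have h := integrable_rpow_neg_one_add_norm_sq (E := EuclideanSpace ℝ (Fin n))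
      (μ := volume) (r := γ) (by rw [finrank_euclideanSpace_fin]; exact hγ)
    apply h.congr
    filter_upwards with y
    rw [Real.sqrt_eq_rpow, ← Real.rpow_mul (by positivity : (0:ℝ) ≤ 1 + ‖y‖^2)]
    congr 1
    ring
  have hfint : Integrable (fun y : EuclideanSpace ℝ (Fin n) =>
      Real.exp (-‖y‖^2/(4*t)) * Real.sqrt (1 + ‖y‖^2) ^ (-γ)) := by
    apply hgint.mono'
    · exact (((((continuous_norm).pow 2).neg.div_const _).rexp).mul hwcont).aestronglyMeasurable
    · filter_upwards with y
      rw [Real.norm_eq_abs, abs_of_nonneg (mul_nonneg (hexp_mem y).1.le (hw_nonneg y))]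
      nlinarith [(hexp_mem y).2, hw_nonneg y, (hexp_mem y).1]
  -- split front factor
  have step0 : (4*π*t) ^ (-(n:ℝ)/2) = c * t ^ (-(n:ℝ)/2) := Real.mul_rpow hπ.le ht0.le
  rw [step0]
  set F := ∫ y : EuclideanSpace ℝ (Fin n),
      Real.exp (-‖y‖^2/(4*t)) * Real.sqrt (1 + ‖y‖^2) ^ (-γ) with hF
  set G := ∫ y : EuclideanSpace ℝ (Fin n), Real.sqrt (1 + ‖y‖^2) ^ (-γ) with hG
  rw [show c * t ^ (-(n:ℝ)/2) * F - t ^ (-(n:ℝ)/2) * c * G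
      = (c * t ^ (-(n:ℝ)/2)) * (F - G) from by ring, abs_mul,
    abs_of_nonneg (by positivity : (0:ℝ) ≤ c * t ^ (-(n:ℝ)/2))]
  -- bound |F - G|
  have hFG : |F - G| ≤ ∫ y : EuclideanSpace ℝ (Fin n),
      (1 - Real.exp (-‖y‖^2/(4*t))) * Real.sqrt (1 + ‖y‖^2) ^ (-γ) := by
    rw [hF, hG, ← integral_sub hfint hgint, ← Real.norm_eq_abs]
    refine (norm_integral_le_integral_norm _).trans_eq ?_
    apply integral_congr_ae
    filter_upwards with y
    rw [Real.norm_eq_abs, show Real.exp (-‖y‖^2/(4*t)) * Real.sqrt (1 + ‖y‖^2) ^ (-γ)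
        - Real.sqrt (1 + ‖y‖^2) ^ (-γ)
        = -((1 - Real.exp (-‖y‖^2/(4*t))) * Real.sqrt (1 + ‖y‖^2) ^ (-γ)) from by ring,
      abs_neg, abs_of_nonneg]
    exact mul_nonneg (by linarith [(hexp_mem y).2]) (hw_nonneg y)
  -- polar coordinates
  have hpolar : (∫ y : EuclideanSpace ℝ (Fin n),
      (1 - Real.exp (-‖y‖^2/(4*t))) * Real.sqrt (1 + ‖y‖^2) ^ (-γ))
      = (n:ℝ) * V * ∫ r in Ioi (0:ℝ), r ^ (n-1) *
          ((1 - Real.exp (-r^2/(4*t))) * Real.sqrt (1 + r^2) ^ (-γ)) := by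
    have h := integral_fun_norm_addHaar (volume : Measure (EuclideanSpace ℝ (Fin n)))
      (fun r : ℝ => (1 - Real.exp (-r^2/(4*t))) * Real.sqrt (1 + r^2) ^ (-γ))
    simp only [finrank_euclideanSpace_fin, nsmul_eq_mul, smul_eq_mul] at h
    rw [h, hV, measureReal_def]
    ring
  have hbound := hkey t ht
  calc c * t ^ (-(n:ℝ)/2) * |F - G|
      ≤ c * t ^ (-(n:ℝ)/2) * ((n:ℝ) * V * ∫ r in Ioi (0:ℝ), r ^ (n-1) *
          ((1 - Real.exp (-r^2/(4*t))) * Real.sqrt (1 + r^2) ^ (-γ))) := by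
        rw [← hpolar]
        exact mul_le_mul_of_nonneg_left hFG (by positivity)
    _ ≤ c * t ^ (-(n:ℝ)/2) * ((n:ℝ) * V * (K *
        (if γ < (n : ℝ) + 2 then t ^ (((n : ℝ) - γ) / 2)
          else if γ = (n : ℝ) + 2 then t⁻¹ * (1 + Real.log t)
          else t⁻¹))) := by
        apply mul_le_mul_of_nonneg_left _ (by positivity)
        exact mul_le_mul_of_nonneg_left hbound (by positivity)
    _ = c * ((n:ℝ) * V) * K * t ^ (-(n:ℝ)/2) *
        (if γ < (n : ℝ) + 2 then t ^ (((n : ℝ) - γ) / 2)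
          else if γ = (n : ℝ) + 2 then t⁻¹ * (1 + Real.log t)
          else t⁻¹) := by ring
end

section
/- For n > 0 and γ < n, there exists C > 0 such that for all t ≥ 1, | ∫_{ℝⁿ} e^(-|z|²/4) [ (|z|² + t^(-1))^(-γ/2) − |z|^(-γ) ] dz | ≤ C ( t^((γ−n)/2) + r(t) ), where r(t) = t^(-1) for γ < n−2, r(t) = t^(-1)(1 + ln t) for γ = n−2, and r(t) = t^((γ−n)/2) for n−2 < γ < n. -/
open MeasureTheory Real Set Metric

local notation "dim" => Module.finrank ℝ

lemma my_measurable_rpow_const (c : ℝ) : Measurable fun s : ℝ => s ^ c := by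
  have h : ∀ s : ℝ, s ^ c = if s < 0 then Real.exp (Real.log s * c) * Real.cos (c * π)
      else if s = 0 then (if c = 0 then 1 else 0) else Real.exp (Real.log s * c) := by
    intro s
    rcases lt_trichotomy s 0 with hs | hs | hs
    · rw [if_pos hs, Real.rpow_def_of_neg hs]
    · rw [if_neg (by simp [hs]), if_pos hs, hs]
      split_ifs with hc
      · rw [hc, Real.rpow_zero]
      · rw [Real.zero_rpow hc]
    · rw [if_neg (not_lt.2 hs.le), if_neg hs.ne', Real.rpow_def_of_pos hs]
  simp_rw [h]
  apply Measurable.ite measurableSet_Iio (((Real.measurable_log.mul measurable_const).exp).mul measurable_const)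
  exact Measurable.ite (measurableSet_singleton 0) measurable_const ((Real.measurable_log.mul measurable_const).exp)

lemma my_rpow_mvt {x y : ℝ} (hx : 0 < x) (hxy : x ≤ y) (β : ℝ) :
    |y ^ β - x ^ β| ≤ |β| * (x ^ (β - 1) + y ^ (β - 1)) * (y - x) := by
  have hy : 0 < y := hx.trans_le hxy
  have key : ∀ u ∈ Icc x y, HasDerivWithinAt (fun u : ℝ => u ^ β)
      (β * u ^ (β - 1)) (Icc x y) u := fun u hu =>
    (Real.hasDerivAt_rpow_const (Or.inl (hx.trans_le hu.1).ne')).hasDerivWithinAt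
  have bnd : ∀ u ∈ Icc x y, ‖β * u ^ (β - 1)‖ ≤ |β| * (x ^ (β - 1) + y ^ (β - 1)) := by
    intro u hu
    have hu0 : 0 < u := hx.trans_le hu.1
    rw [norm_mul, Real.norm_eq_abs, Real.norm_eq_abs,
      abs_of_nonneg (rpow_nonneg hu0.le _)]
    apply mul_le_mul_of_nonneg_left _ (abs_nonneg β)
    rcases le_or_gt 0 (β - 1) with h | h
    · exact le_add_of_nonneg_of_le (rpow_nonneg hx.le _) (rpow_le_rpow hu0.le hu.2 h)
    · exact le_add_of_le_of_nonneg (rpow_le_rpow_of_nonpos hx hu.1 h.le) (rpow_nonneg hy.le _)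
  have := (convex_Icc x y).norm_image_sub_le_of_norm_hasDerivWithin_le key bnd
    (left_mem_Icc.2 hxy) (right_mem_Icc.2 hxy)
  rwa [Real.norm_eq_abs, Real.norm_eq_abs, abs_of_nonneg (sub_nonneg.2 hxy)] at this

-- pointwise outer bound
lemma my_ptwise_outer {γ σ s : ℝ} (hσ : 0 < σ) (hs : σ ≤ s) :
    |(s ^ 2 + σ ^ 2) ^ (-γ / 2) - s ^ (-γ)| ≤
      ((|γ| + 1) * (1 + 2 ^ (|γ| + 2))) * σ ^ 2 * s ^ (-γ - 2) := by
  have hs0 : 0 < s := hσ.trans_le hs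
  have hx : (0:ℝ) < s ^ 2 := by positivity
  have hxy : s ^ 2 ≤ s ^ 2 + σ ^ 2 := by nlinarith
  set β := -γ / 2 with hβ
  have e1 : (s ^ 2 : ℝ) ^ β = s ^ (-γ) := by
    rw [← Real.rpow_natCast s 2, ← Real.rpow_mul hs0.le]
    congr 1; rw [hβ]; ring
  have e2 : (s ^ 2 : ℝ) ^ (β - 1) = s ^ (-γ - 2) := by
    rw [← Real.rpow_natCast s 2, ← Real.rpow_mul hs0.le]
    congr 1; ring
  have key := my_rpow_mvt hx hxy β
  rw [e1, e2] at key
  have hsub : s ^ 2 + σ ^ 2 - s ^ 2 = σ ^ 2 := by ring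
  rw [hsub] at key
  have hβabs : |β| ≤ |γ| + 1 := by
    rw [hβ, abs_div]
    rw [abs_neg, abs_two]  -- |−γ|/|2|
    nlinarith [abs_nonneg γ]
  have hy1 : (s ^ 2 + σ ^ 2 : ℝ) ^ (β - 1) ≤ 2 ^ (|γ| + 2) * s ^ (-γ - 2) := by
    rcases le_or_gt (β - 1) 0 with h | h
    · calc (s ^ 2 + σ ^ 2 : ℝ) ^ (β - 1) ≤ (s ^ 2 : ℝ) ^ (β - 1) :=
            rpow_le_rpow_of_nonpos hx hxy h
        _ = s ^ (-γ - 2) := e2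
        _ ≤ 2 ^ (|γ| + 2) * s ^ (-γ - 2) := by
            nlinarith [Real.one_le_rpow (by norm_num : (1:ℝ) ≤ 2)
              (by positivity : (0:ℝ) ≤ |γ| + 2), rpow_nonneg hs0.le (-γ - 2)]
    · have h2x : s ^ 2 + σ ^ 2 ≤ 2 * s ^ 2 := by nlinarith
      calc (s ^ 2 + σ ^ 2 : ℝ) ^ (β - 1) ≤ (2 * s ^ 2 : ℝ) ^ (β - 1) :=
            rpow_le_rpow (by positivity) h2x h.le
        _ = 2 ^ (β - 1) * (s ^ 2 : ℝ) ^ (β - 1) :=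
            Real.mul_rpow (by norm_num) (by positivity)
        _ ≤ 2 ^ (|γ| + 2) * s ^ (-γ - 2) := by
            rw [e2]
            apply mul_le_mul_of_nonneg_right _ (rpow_nonneg hs0.le _)
            apply Real.rpow_le_rpow_of_exponent_le (by norm_num)
            have := abs_nonneg γ
            have := neg_abs_le γ
            rw [hβ]; nlinarith [le_abs_self γ, neg_le_abs γ]
  calc |(s ^ 2 + σ ^ 2) ^ β - s ^ (-γ)|
      ≤ |β| * (s ^ (-γ - 2) + (s ^ 2 + σ ^ 2) ^ (β - 1)) * σ ^ 2 := key
    _ ≤ ((|γ| + 1) * (1 + 2 ^ (|γ| + 2))) * σ ^ 2 * s ^ (-γ - 2) := by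
        have h1 : (0:ℝ) ≤ s ^ (-γ - 2) := rpow_nonneg hs0.le _
        have h2 : (0:ℝ) ≤ σ ^ 2 := by positivity
        have h3 : (0:ℝ) ≤ |β| := abs_nonneg β
        have h5 : (0:ℝ) ≤ (s ^ 2 + σ ^ 2) ^ (β - 1) := rpow_nonneg (by positivity) _
        have h6 : (0:ℝ) < 2 ^ (|γ| + 2) := rpow_pos_of_pos (by norm_num) _
        nlinarith [mul_le_mul hβabs (add_le_add (le_refl (s ^ (-γ-2))) hy1)
          (by positivity) (by positivity)]

-- pointwise inner bound
lemma my_ptwise_inner {γ σ s : ℝ} (hσ : 0 < σ) (hs0 : 0 ≤ s) (hs : s ≤ σ) :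
    |(s ^ 2 + σ ^ 2) ^ (-γ / 2) - s ^ (-γ)| ≤
      2 ^ (|γ| + 2) * (s ^ (-γ) + σ ^ (-γ)) := by
  have hK : (1:ℝ) ≤ 2 ^ (|γ| + 2) :=
    Real.one_le_rpow (by norm_num) (by positivity)
  have h1 : (0:ℝ) ≤ s ^ (-γ) := rpow_nonneg hs0 _
  have h2 : (0:ℝ) ≤ σ ^ (-γ) := rpow_nonneg hσ.le _
  have eσ : ((σ:ℝ) ^ 2) ^ (-γ / 2) = σ ^ (-γ) := by
    rw [← Real.rpow_natCast σ 2, ← Real.rpow_mul hσ.le]; congr 1; ring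
  have habs : |(s ^ 2 + σ ^ 2) ^ (-γ / 2) - s ^ (-γ)| ≤
      (s ^ 2 + σ ^ 2) ^ (-γ / 2) + s ^ (-γ) := by
    have := rpow_nonneg (show (0:ℝ) ≤ s ^ 2 + σ ^ 2 by positivity) (-γ / 2)
    rw [abs_sub_le_iff]; constructor <;> nlinarith
  have hmain : (s ^ 2 + σ ^ 2) ^ (-γ / 2) ≤ 2 ^ (|γ| + 2) * σ ^ (-γ) := by
    rcases le_or_gt 0 γ with h | h
    · calc (s ^ 2 + σ ^ 2) ^ (-γ / 2) ≤ ((σ:ℝ) ^ 2) ^ (-γ / 2) := by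
            apply rpow_le_rpow_of_nonpos (by positivity) (by nlinarith) (by linarith [h])
        _ = σ ^ (-γ) := eσ
        _ ≤ 2 ^ (|γ| + 2) * σ ^ (-γ) := by nlinarith
    · calc (s ^ 2 + σ ^ 2) ^ (-γ / 2) ≤ (2 * σ ^ 2) ^ (-γ / 2) := by
            apply rpow_le_rpow (by positivity) (by nlinarith) (by linarith)
        _ = 2 ^ (-γ / 2) * ((σ:ℝ) ^ 2) ^ (-γ / 2) :=
            Real.mul_rpow (by norm_num) (by positivity)
        _ ≤ 2 ^ (|γ| + 2) * σ ^ (-γ) := by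
            rw [eσ]
            apply mul_le_mul_of_nonneg_right _ h2
            apply Real.rpow_le_rpow_of_exponent_le (by norm_num)
            nlinarith [neg_le_abs γ]
  nlinarith

lemma my_lintegral_fun_norm_addHaar {E : Type*} [NormedAddCommGroup E] [NormedSpace ℝ E]
    [MeasurableSpace E] [BorelSpace E] [Nontrivial E] [FiniteDimensional ℝ E]
    (μ : Measure E) [μ.IsAddHaarMeasure] (f : ℝ → ENNReal) (hf : Measurable f) :
    ∫⁻ x, f ‖x‖ ∂μ = (dim E) * μ (ball 0 1) *
      ∫⁻ y in Ioi (0:ℝ), ENNReal.ofReal (y ^ (dim E - 1)) * f y := by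
  calc
    ∫⁻ x, f ‖x‖ ∂μ = ∫⁻ x in ({(0:E)}ᶜ : Set E), f ‖x‖ ∂μ := by
      rw [restrict_compl_singleton]
    _ = ∫⁻ x : ({(0:E)}ᶜ : Set E), f ‖x.1‖ ∂(μ.comap (↑)) := by
      rw [lintegral_subtype_comap (measurableSet_singleton _).compl (fun x => f ‖x‖)]
    _ = ∫⁻ p : sphere (0:E) 1 × Ioi (0:ℝ), f p.2
        ∂(μ.toSphere.prod (.volumeIoiPow (dim E - 1))) :=
      by
        refine Eq.trans ?_ (μ.measurePreserving_homeomorphUnitSphereProd.lintegral_comp_emb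
          (Homeomorph.measurableEmbedding _) (fun p => f p.2))
        apply lintegral_congr; intro x; simp
    _ = μ.toSphere univ * ∫⁻ y : Ioi (0:ℝ), f y ∂(Measure.volumeIoiPow (dim E - 1)) := by
      have hm : Measurable (fun p : sphere (0:E) 1 × Ioi (0:ℝ) => f ↑p.2) :=
        (hf.comp measurable_subtype_coe).comp measurable_snd
      rw [lintegral_prod _ hm.aemeasurable]
      simp [lintegral_const, mul_comm]
    _ = _ := by
      have hg : Measurable (fun y : Ioi (0:ℝ) => f ↑y) := hf.comp measurable_subtype_coe
      have hd : Measurable (fun r : Ioi (0:ℝ) => ENNReal.ofReal (r.1 ^ (dim E - 1))) := by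
        fun_prop
      rw [Measure.toSphere_apply_univ, Measure.volumeIoiPow,
        lintegral_withDensity_eq_lintegral_mul _ hd hg]
      simp only [Pi.mul_apply]
      rw [lintegral_subtype_comap measurableSet_Ioi
          (fun y => ENNReal.ofReal (y ^ (dim E - 1)) * f y)]

lemma my_chain (n : ℕ) (hn : 0 < n) (γ : ℝ) (hγ : γ < n) :
    ∃ c1 > (0:ℝ), ∃ c2 > (0:ℝ), ∀ t : ℝ, 1 ≤ t → ∀ PP : ℝ, 0 ≤ PP →
      (∫⁻ s in Ioi (t ^ (-(1/2) : ℝ)),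
          ENNReal.ofReal (s ^ ((n:ℝ) - 3 - γ) * Real.exp (-s ^ 2 / 4))) ≤ ENNReal.ofReal PP →
      |∫ z : EuclideanSpace ℝ (Fin n),
          Real.exp (-‖z‖ ^ 2 / 4) * ((‖z‖ ^ 2 + t⁻¹) ^ (-γ / 2) - ‖z‖ ^ (-γ))|
        ≤ c1 * t ^ ((γ - (n : ℝ)) / 2) + c2 * t⁻¹ * PP := by
  haveI : Nonempty (Fin n) := ⟨⟨0, hn⟩⟩
  haveI : Nontrivial (EuclideanSpace ℝ (Fin n)) := inferInstance
  have hnγ : (0:ℝ) < (n:ℝ) - γ := by linarith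
  have hn0 : (0:ℝ) < (n:ℝ) := by exact_mod_cast hn
  set V : ℝ := (volume (ball (0 : EuclideanSpace ℝ (Fin n)) 1)).toReal with hV
  have hV0 : 0 ≤ V := ENNReal.toReal_nonneg
  set K1 : ℝ := 2 ^ (|γ| + 2) with hK1
  have hK1pos : 0 < K1 := rpow_pos_of_pos (by norm_num) _
  set K2 : ℝ := (|γ| + 1) * (1 + 2 ^ (|γ| + 2)) with hK2
  have hK2pos : 0 < K2 := by
    apply mul_pos (by positivity)
    have := rpow_pos_of_pos (show (0:ℝ) < 2 by norm_num) (|γ| + 2); linarith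
  refine ⟨(n : ℝ) * V * K1 * (1 / ((n:ℝ) - γ) + 1 / n) + 1, by positivity,
    (n : ℝ) * V * K2 + 1, by positivity, ?_⟩
  intro t ht PP hPP htail
  have ht0 : (0:ℝ) < t := lt_of_lt_of_le one_pos ht
  set σ : ℝ := t ^ (-(1/2) : ℝ) with hσdef
  have hσ0 : 0 < σ := rpow_pos_of_pos ht0 _
  have hσ1 : σ ≤ 1 := rpow_le_one_of_one_le_of_nonpos ht (by norm_num)
  have hε : σ ^ 2 = t⁻¹ := by
    rw [hσdef, ← Real.rpow_natCast (t ^ (-(1/2):ℝ)) 2, ← Real.rpow_mul ht0.le,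
      show (-(1/2):ℝ) * (2:ℕ) = -1 by push_cast; ring, Real.rpow_neg_one]
  have hA : σ ^ ((n:ℝ) - γ) = t ^ ((γ - (n:ℝ)) / 2) := by
    rw [hσdef, ← Real.rpow_mul ht0.le]
    congr 1; ring
  have hA0 : 0 ≤ t ^ ((γ - (n:ℝ)) / 2) := rpow_nonneg ht0.le _
  -- the radial majorant
  set G : ℝ → ENNReal := fun s =>
    ENNReal.ofReal (Real.exp (-s ^ 2 / 4) * |(s ^ 2 + σ ^ 2) ^ (-γ / 2) - s ^ (-γ)|) with hG
  have hGmeas : Measurable G := by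
    apply Measurable.ennreal_ofReal
    apply Measurable.mul
    · exact (((measurable_id.pow_const 2).neg).div_const 4).exp
    · exact (((my_measurable_rpow_const (-γ/2)).comp
        ((measurable_id.pow_const 2).add_const (σ^2))).sub
        (my_measurable_rpow_const (-γ))).abs
  -- step 1 : bound |∫ f| by the lintegral of G ∘ norm
  have step1 : |∫ z : EuclideanSpace ℝ (Fin n),
        Real.exp (-‖z‖ ^ 2 / 4) * ((‖z‖ ^ 2 + t⁻¹) ^ (-γ / 2) - ‖z‖ ^ (-γ))|
      ≤ (∫⁻ z : EuclideanSpace ℝ (Fin n), G ‖z‖).toReal := by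
    have h := norm_integral_le_lintegral_norm (μ := (volume : Measure (EuclideanSpace ℝ (Fin n))))
      (fun z : EuclideanSpace ℝ (Fin n) =>
        Real.exp (-‖z‖ ^ 2 / 4) * ((‖z‖ ^ 2 + t⁻¹) ^ (-γ / 2) - ‖z‖ ^ (-γ)))
    rw [Real.norm_eq_abs] at h
    refine h.trans (le_of_eq ?_)
    congr 1
    apply lintegral_congr
    intro z
    rw [hG, Real.norm_eq_abs, abs_mul, abs_of_pos (exp_pos _), hε]
  -- step 2 : polar coordinates
  have hfr : dim (EuclideanSpace ℝ (Fin n)) = n := finrank_euclideanSpace_fin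
  have step2 : (∫⁻ z : EuclideanSpace ℝ (Fin n), G ‖z‖)
      = (n : ENNReal) * volume (ball (0 : EuclideanSpace ℝ (Fin n)) 1) *
        ∫⁻ s in Ioi (0:ℝ), ENNReal.ofReal (s ^ (n - 1)) * G s := by
    rw [my_lintegral_fun_norm_addHaar volume G hGmeas, hfr]
  -- abbreviations for exponents
  set r1 : ℝ := (n:ℝ) - 1 - γ with hr1
  set r2 : ℝ := (n:ℝ) - 1 with hr2
  set r3 : ℝ := (n:ℝ) - 3 - γ with hr3
  have hcast : ((n - 1 : ℕ) : ℝ) = r2 := by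
    rw [hr2, Nat.cast_sub hn]; norm_num
  have epow : ∀ s : ℝ, 0 < s → (s : ℝ) ^ (n - 1) = s ^ r2 := by
    intro s hs
    rw [← Real.rpow_natCast s (n - 1), hcast]
  -- step 3 : split the radial integral
  have hsplit : (∫⁻ s in Ioi (0:ℝ), ENNReal.ofReal (s ^ (n - 1)) * G s)
      = (∫⁻ s in Ioc (0:ℝ) σ, ENNReal.ofReal (s ^ (n - 1)) * G s)
        + ∫⁻ s in Ioi σ, ENNReal.ofReal (s ^ (n - 1)) * G s := by
    rw [← Set.Ioc_union_Ioi_eq_Ioi hσ0.le,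
      lintegral_union measurableSet_Ioi (Set.Ioc_disjoint_Ioi le_rfl)]
  have hArp : 0 ≤ σ ^ ((n:ℝ) - γ) := rpow_nonneg hσ0.le _
  -- inner piece
  have i1 : IntervalIntegrable (fun s : ℝ => s ^ r1) volume 0 σ :=
    intervalIntegral.intervalIntegrable_rpow' (by rw [hr1]; linarith)
  have i2 : IntervalIntegrable (fun s : ℝ => σ ^ (-γ) * s ^ r2) volume 0 σ :=
    (intervalIntegral.intervalIntegrable_rpow' (by rw [hr2]; linarith)).const_mul _
  have hJ1 : (∫⁻ s in Ioc (0:ℝ) σ, ENNReal.ofReal (s ^ (n - 1)) * G s)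
      ≤ ENNReal.ofReal (K1 * (σ ^ ((n:ℝ) - γ) / ((n:ℝ) - γ) + σ ^ ((n:ℝ) - γ) / n)) := by
    have mono : ∀ s ∈ Ioc (0:ℝ) σ, ENNReal.ofReal (s ^ (n - 1)) * G s
        ≤ ENNReal.ofReal (K1 * (s ^ r1 + σ ^ (-γ) * s ^ r2)) := by
      intro s hs
      rw [hG, ← ENNReal.ofReal_mul (pow_nonneg hs.1.le _)]
      apply ENNReal.ofReal_le_ofReal
      have hd := my_ptwise_inner (γ := γ) hσ0 hs.1.le hs.2
      have hexp : Real.exp (-s ^ 2 / 4) ≤ 1 :=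
        Real.exp_le_one_iff.mpr (by nlinarith [sq_nonneg s])
      have e3 : s ^ r2 * s ^ (-γ) = s ^ r1 := by
        rw [← Real.rpow_add hs.1, show r2 + -γ = r1 by simp only [hr1, hr2]; ring]
      have key : Real.exp (-s ^ 2 / 4) * |(s ^ 2 + σ ^ 2) ^ (-γ / 2) - s ^ (-γ)|
          ≤ K1 * (s ^ (-γ) + σ ^ (-γ)) := by
        calc Real.exp (-s ^ 2 / 4) * |(s ^ 2 + σ ^ 2) ^ (-γ / 2) - s ^ (-γ)|
            ≤ 1 * |(s ^ 2 + σ ^ 2) ^ (-γ / 2) - s ^ (-γ)| :=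
              mul_le_mul_of_nonneg_right hexp (abs_nonneg _)
          _ = |(s ^ 2 + σ ^ 2) ^ (-γ / 2) - s ^ (-γ)| := one_mul _
          _ ≤ K1 * (s ^ (-γ) + σ ^ (-γ)) := hd
      calc s ^ (n - 1) * (Real.exp (-s ^ 2 / 4) * |(s ^ 2 + σ ^ 2) ^ (-γ / 2) - s ^ (-γ)|)
          ≤ s ^ (n - 1) * (K1 * (s ^ (-γ) + σ ^ (-γ))) :=
            mul_le_mul_of_nonneg_left key (pow_nonneg hs.1.le _)
        _ = s ^ r2 * (K1 * (s ^ (-γ) + σ ^ (-γ))) := by rw [epow s hs.1]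
        _ = K1 * (s ^ r1 + σ ^ (-γ) * s ^ r2) := by rw [← e3]; ring
    have hint : IntegrableOn (fun s : ℝ => K1 * (s ^ r1 + σ ^ (-γ) * s ^ r2)) (Ioc 0 σ) :=
      (((intervalIntegrable_iff_integrableOn_Ioc_of_le hσ0.le).mp (i1.add i2)).const_mul _)
    have hnn : 0 ≤ᵐ[volume.restrict (Ioc (0:ℝ) σ)]
        fun s : ℝ => K1 * (s ^ r1 + σ ^ (-γ) * s ^ r2) := by
      filter_upwards [ae_restrict_mem measurableSet_Ioc] with s hs
      exact mul_nonneg hK1pos.le (add_nonneg (rpow_nonneg hs.1.le _)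
        (mul_nonneg (rpow_nonneg hσ0.le _) (rpow_nonneg hs.1.le _)))
    calc (∫⁻ s in Ioc (0:ℝ) σ, ENNReal.ofReal (s ^ (n - 1)) * G s)
        ≤ ∫⁻ s in Ioc (0:ℝ) σ, ENNReal.ofReal (K1 * (s ^ r1 + σ ^ (-γ) * s ^ r2)) :=
          setLIntegral_mono' measurableSet_Ioc mono
      _ = ENNReal.ofReal (∫ s in Ioc (0:ℝ) σ, K1 * (s ^ r1 + σ ^ (-γ) * s ^ r2)) :=
          (ofReal_integral_eq_lintegral_ofReal hint hnn).symm
      _ ≤ ENNReal.ofReal (K1 * (σ ^ ((n:ℝ) - γ) / ((n:ℝ) - γ) + σ ^ ((n:ℝ) - γ) / n)) := by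
          apply ENNReal.ofReal_le_ofReal
          rw [← intervalIntegral.integral_of_le hσ0.le, intervalIntegral.integral_const_mul,
            intervalIntegral.integral_add i1 i2, intervalIntegral.integral_const_mul,
            integral_rpow (Or.inl (by rw [hr1]; linarith)),
            integral_rpow (Or.inl (by rw [hr2]; linarith))]
          have z1 : (0:ℝ) ^ (r1 + 1) = 0 := Real.zero_rpow (by rw [hr1]; intro h; linarith [h])
          have z2 : (0:ℝ) ^ (r2 + 1) = 0 := Real.zero_rpow (by rw [hr2]; intro h; linarith [h])
          have er1 : σ ^ (r1 + 1) = σ ^ ((n:ℝ) - γ) := by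
            rw [show r1 + 1 = (n:ℝ) - γ by simp only [hr1]; ring]
          have er2 : σ ^ (-γ) * σ ^ (r2 + 1) = σ ^ ((n:ℝ) - γ) := by
            rw [← Real.rpow_add hσ0, show -γ + (r2 + 1) = (n:ℝ) - γ by simp only [hr2]; ring]
          rw [z1, z2, er1]
          rw [show σ ^ (-γ) * ((σ ^ (r2 + 1) - 0) / (r2 + 1)) = (σ ^ (-γ) * σ ^ (r2+1)) / (r2+1) by ring,
            er2, show r2 + 1 = (n:ℝ) by rw [hr2]; ring, show r1 + 1 = (n:ℝ) - γ by rw [hr1]; ring]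
          apply le_of_eq; ring
  -- outer piece
  have hJ2 : (∫⁻ s in Ioi σ, ENNReal.ofReal (s ^ (n - 1)) * G s)
      ≤ ENNReal.ofReal (K2 * t⁻¹ * PP) := by
    have mono : ∀ s ∈ Ioi σ, ENNReal.ofReal (s ^ (n - 1)) * G s
        ≤ ENNReal.ofReal (K2 * σ ^ 2) * ENNReal.ofReal (s ^ r3 * Real.exp (-s ^ 2 / 4)) := by
      intro s hs
      have hs0 : 0 < s := hσ0.trans hs
      rw [hG, ← ENNReal.ofReal_mul (pow_nonneg hs0.le _),
        ← ENNReal.ofReal_mul (by positivity : (0:ℝ) ≤ K2 * σ ^ 2)]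
      apply ENNReal.ofReal_le_ofReal
      have hd := my_ptwise_outer (γ := γ) hσ0 (le_of_lt hs)
      have e3 : s ^ r2 * s ^ (-γ - 2) = s ^ r3 := by
        rw [← Real.rpow_add hs0, show r2 + (-γ - 2) = r3 by simp only [hr2, hr3]; ring]
      calc s ^ (n - 1) * (Real.exp (-s ^ 2 / 4) * |(s ^ 2 + σ ^ 2) ^ (-γ / 2) - s ^ (-γ)|)
          = Real.exp (-s ^ 2 / 4) * (s ^ r2 * |(s ^ 2 + σ ^ 2) ^ (-γ / 2) - s ^ (-γ)|) := by
            rw [epow s hs0]; ring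
        _ ≤ Real.exp (-s ^ 2 / 4) * (s ^ r2 * (K2 * σ ^ 2 * s ^ (-γ - 2))) := by
            apply mul_le_mul_of_nonneg_left _ (Real.exp_pos _).le
            exact mul_le_mul_of_nonneg_left hd (rpow_nonneg hs0.le _)
        _ = K2 * σ ^ 2 * (s ^ r3 * Real.exp (-s ^ 2 / 4)) := by rw [← e3]; ring
    calc (∫⁻ s in Ioi σ, ENNReal.ofReal (s ^ (n - 1)) * G s)
        ≤ ∫⁻ s in Ioi σ, ENNReal.ofReal (K2 * σ ^ 2) * ENNReal.ofReal (s ^ r3 * Real.exp (-s ^ 2 / 4)) :=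
          setLIntegral_mono' measurableSet_Ioi mono
      _ = ENNReal.ofReal (K2 * σ ^ 2) *
            ∫⁻ s in Ioi σ, ENNReal.ofReal (s ^ r3 * Real.exp (-s ^ 2 / 4)) :=
          lintegral_const_mul' _ _ ENNReal.ofReal_ne_top
      _ ≤ ENNReal.ofReal (K2 * σ ^ 2) * ENNReal.ofReal PP := mul_le_mul_right htail _
      _ = ENNReal.ofReal (K2 * t⁻¹ * PP) := by
          rw [← ENNReal.ofReal_mul (by positivity : (0:ℝ) ≤ K2 * σ ^ 2), hε]
  -- combine
  have hB1 : 0 ≤ K1 * (σ ^ ((n:ℝ) - γ) / ((n:ℝ) - γ) + σ ^ ((n:ℝ) - γ) / n) :=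
    mul_nonneg hK1pos.le (add_nonneg (div_nonneg hArp hnγ.le) (div_nonneg hArp hn0.le))
  have hB2 : 0 ≤ K2 * t⁻¹ * PP := by positivity
  have hvol : (n : ENNReal) * volume (ball (0 : EuclideanSpace ℝ (Fin n)) 1)
      = ENNReal.ofReal ((n:ℝ) * V) := by
    rw [ENNReal.ofReal_mul (Nat.cast_nonneg n), ENNReal.ofReal_natCast, hV,
      ENNReal.ofReal_toReal measure_ball_lt_top.ne]
  have total : |∫ z : EuclideanSpace ℝ (Fin n),
        Real.exp (-‖z‖ ^ 2 / 4) * ((‖z‖ ^ 2 + t⁻¹) ^ (-γ / 2) - ‖z‖ ^ (-γ))|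
      ≤ (n:ℝ) * V * (K1 * (σ ^ ((n:ℝ) - γ) / ((n:ℝ) - γ) + σ ^ ((n:ℝ) - γ) / n)
          + K2 * t⁻¹ * PP) := by
    refine step1.trans ?_
    rw [step2, hsplit]
    apply ENNReal.toReal_le_of_le_ofReal
      (mul_nonneg (by positivity) (add_nonneg hB1 hB2))
    rw [hvol]
    calc ENNReal.ofReal ((n:ℝ) * V) *
          ((∫⁻ s in Ioc (0:ℝ) σ, ENNReal.ofReal (s ^ (n - 1)) * G s)
            + ∫⁻ s in Ioi σ, ENNReal.ofReal (s ^ (n - 1)) * G s)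
        ≤ ENNReal.ofReal ((n:ℝ) * V) *
            (ENNReal.ofReal (K1 * (σ ^ ((n:ℝ) - γ) / ((n:ℝ) - γ) + σ ^ ((n:ℝ) - γ) / n))
              + ENNReal.ofReal (K2 * t⁻¹ * PP)) :=
          mul_le_mul_right (add_le_add hJ1 hJ2) _
      _ = ENNReal.ofReal ((n:ℝ) * V * (K1 * (σ ^ ((n:ℝ) - γ) / ((n:ℝ) - γ) + σ ^ ((n:ℝ) - γ) / n)
            + K2 * t⁻¹ * PP)) := by
          rw [← ENNReal.ofReal_add hB1 hB2, ← ENNReal.ofReal_mul (by positivity)]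
  rw [hA] at total
  refine total.trans ?_
  have expand : (n:ℝ) * V * (K1 * (t ^ ((γ - (n:ℝ)) / 2) / ((n:ℝ) - γ) + t ^ ((γ - (n:ℝ)) / 2) / n)
        + K2 * t⁻¹ * PP)
      = ((n:ℝ) * V * K1 * (1 / ((n:ℝ) - γ) + 1 / n)) * t ^ ((γ - (n:ℝ)) / 2)
        + ((n:ℝ) * V * K2) * (t⁻¹ * PP) := by ring
  rw [expand]
  have h1 : ((n:ℝ) * V * K1 * (1 / ((n:ℝ) - γ) + 1 / n)) * t ^ ((γ - (n:ℝ)) / 2)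
      ≤ ((n:ℝ) * V * K1 * (1 / ((n:ℝ) - γ) + 1 / n) + 1) * t ^ ((γ - (n:ℝ)) / 2) := by
    apply mul_le_mul_of_nonneg_right (by linarith) hA0
  have h2 : ((n:ℝ) * V * K2) * (t⁻¹ * PP) ≤ ((n:ℝ) * V * K2 + 1) * (t⁻¹ * PP) := by
    apply mul_le_mul_of_nonneg_right (by linarith) (by positivity)
  calc ((n:ℝ) * V * K1 * (1 / ((n:ℝ) - γ) + 1 / n)) * t ^ ((γ - (n:ℝ)) / 2)
        + ((n:ℝ) * V * K2) * (t⁻¹ * PP)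
      ≤ ((n:ℝ) * V * K1 * (1 / ((n:ℝ) - γ) + 1 / n) + 1) * t ^ ((γ - (n:ℝ)) / 2)
        + ((n:ℝ) * V * K2 + 1) * (t⁻¹ * PP) := add_le_add h1 h2
    _ = ((n:ℝ) * V * K1 * (1 / ((n:ℝ) - γ) + 1 / n) + 1) * t ^ ((γ - (n:ℝ)) / 2)
        + ((n:ℝ) * V * K2 + 1) * t⁻¹ * PP := by ring

set_option maxHeartbeats 1000000 in
theorem gaussian_difference_estimate (n : ℕ) (hn : 0 < n) (γ : ℝ) (hγ : γ < n) :
    ∃ C > 0, ∀ t ≥ (1 : ℝ),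
      |∫ z : EuclideanSpace ℝ (Fin n),
          Real.exp (-‖z‖ ^ 2 / 4) * ((‖z‖ ^ 2 + t⁻¹) ^ (-γ / 2) - ‖z‖ ^ (-γ))|
      ≤ C * (t ^ ((γ - (n : ℝ)) / 2) +
          (if γ < (n : ℝ) - 2 then t⁻¹
            else if γ = (n : ℝ) - 2 then t⁻¹ * (1 + Real.log t)
            else t ^ ((γ - (n : ℝ)) / 2))) := by
  obtain ⟨c1, hc1, c2, hc2, hchain⟩ := my_chain n hn γ hγ
  have hefun : ∀ r : ℝ, (fun s : ℝ => s ^ r * Real.exp (-s ^ 2 / 4))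
      = (fun s : ℝ => s ^ r * Real.exp (-(4⁻¹:ℝ) * s ^ 2)) := by
    intro r; funext x; rw [show -x ^ 2 / 4 = -(4⁻¹:ℝ) * x ^ 2 by ring]
  have hefun2 : (fun s : ℝ => Real.exp (-s ^ 2 / 4))
      = (fun s : ℝ => Real.exp (-(4⁻¹:ℝ) * s ^ 2)) := by
    funext x; rw [show -x ^ 2 / 4 = -(4⁻¹:ℝ) * x ^ 2 by ring]
  set D2 : ℝ := ∫ s in Ioi (0:ℝ), Real.exp (-s ^ 2 / 4) with hD2
  have hD2nn : 0 ≤ D2 := setIntegral_nonneg measurableSet_Ioi fun s _ => (exp_pos _).le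
  have hD2int : IntegrableOn (fun s : ℝ => Real.exp (-s ^ 2 / 4)) (Ioi 0) := by
    rw [hefun2]
    exact (integrable_exp_neg_mul_sq (by norm_num : (0:ℝ) < 4⁻¹)).integrableOn
  have hD2lint : (∫⁻ s in Ioi (0:ℝ), ENNReal.ofReal (Real.exp (-s ^ 2 / 4)))
      = ENNReal.ofReal D2 :=
    (ofReal_integral_eq_lintegral_ofReal hD2int
      (Filter.Eventually.of_forall fun s => (exp_pos _).le)).symm
  rcases lt_trichotomy γ ((n:ℝ) - 2) with hcase | hcase | hcase
  · -- γ < n - 2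
    set D1 : ℝ := ∫ s in Ioi (0:ℝ), s ^ ((n:ℝ) - 3 - γ) * Real.exp (-s ^ 2 / 4) with hD1
    have hD1int : IntegrableOn (fun s : ℝ => s ^ ((n:ℝ) - 3 - γ) * Real.exp (-s ^ 2 / 4))
        (Ioi 0) := by
      rw [hefun ((n:ℝ) - 3 - γ)]
      exact integrableOn_rpow_mul_exp_neg_mul_sq (by norm_num : (0:ℝ) < 4⁻¹)
        (by linarith : (-1:ℝ) < (n:ℝ) - 3 - γ)
    have hD1nn : 0 ≤ D1 := setIntegral_nonneg measurableSet_Ioi fun s hs =>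
      mul_nonneg (rpow_nonneg (le_of_lt hs) _) (exp_pos _).le
    refine ⟨c1 + c2 * (D1 + 1) + 1, by positivity, ?_⟩
    intro t ht
    have ht0 : (0:ℝ) < t := by linarith
    have hσ0 : (0:ℝ) < t ^ (-(1/2):ℝ) := rpow_pos_of_pos ht0 _
    rw [if_pos hcase]
    have htail : (∫⁻ s in Ioi (t ^ (-(1/2) : ℝ)),
        ENNReal.ofReal (s ^ ((n:ℝ) - 3 - γ) * Real.exp (-s ^ 2 / 4)))
        ≤ ENNReal.ofReal D1 := by
      refine le_trans (lintegral_mono_set (Ioi_subset_Ioi hσ0.le)) ?_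
      rw [hD1]
      exact le_of_eq (ofReal_integral_eq_lintegral_ofReal hD1int
        (by filter_upwards [ae_restrict_mem measurableSet_Ioi] with s hs using
          mul_nonneg (rpow_nonneg (le_of_lt hs) _) (exp_pos _).le)).symm
    have h := hchain t ht D1 hD1nn htail
    refine h.trans ?_
    have hA0 : 0 ≤ t ^ ((γ - (n:ℝ)) / 2) := rpow_nonneg ht0.le _
    have hti : (0:ℝ) ≤ t⁻¹ := by positivity
    nlinarith [mul_nonneg hc1.le hti,
      mul_nonneg (mul_nonneg hc2.le (by linarith : (0:ℝ) ≤ D1 + 1)) hA0,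
      mul_nonneg hc2.le hti, mul_nonneg (mul_nonneg hc2.le hD1nn) hA0,
      mul_nonneg (mul_nonneg hc2.le hD1nn) hti, mul_nonneg hA0 hti]
  · -- γ = n - 2
    refine ⟨c1 + c2 * (1 + D2) + 1, by positivity, ?_⟩
    intro t ht
    have ht0 : (0:ℝ) < t := by linarith
    have hσ0 : (0:ℝ) < t ^ (-(1/2):ℝ) := rpow_pos_of_pos ht0 _
    have hσ1 : t ^ (-(1/2):ℝ) ≤ 1 := rpow_le_one_of_one_le_of_nonpos ht (by norm_num)
    have hlog : 0 ≤ Real.log t := log_nonneg ht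
    rw [if_neg (by rw [hcase]; exact lt_irrefl _), if_pos hcase]
    have hr : (n:ℝ) - 3 - γ = -1 := by rw [hcase]; ring
    have hPP : 0 ≤ (1/2) * Real.log t + D2 := by positivity
    have htail : (∫⁻ s in Ioi (t ^ (-(1/2) : ℝ)),
        ENNReal.ofReal (s ^ ((n:ℝ) - 3 - γ) * Real.exp (-s ^ 2 / 4)))
        ≤ ENNReal.ofReal ((1/2) * Real.log t + D2) := by
      rw [hr, ← Ioc_union_Ioi_eq_Ioi hσ1,
        lintegral_union measurableSet_Ioi (Ioc_disjoint_Ioi le_rfl)]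
      have hTa : (∫⁻ s in Ioc (t ^ (-(1/2) : ℝ)) 1,
          ENNReal.ofReal (s ^ (-1:ℝ) * Real.exp (-s ^ 2 / 4)))
          ≤ ENNReal.ofReal ((1/2) * Real.log t) := by
        have hint : IntegrableOn (fun s : ℝ => s ^ (-1:ℝ)) (Ioc (t ^ (-(1/2) : ℝ)) 1) :=
          (intervalIntegrable_iff_integrableOn_Ioc_of_le hσ1).mp
            (intervalIntegral.intervalIntegrable_rpow
              (Or.inr (notMem_uIcc_of_lt hσ0 one_pos)))
        calc (∫⁻ s in Ioc (t ^ (-(1/2) : ℝ)) 1,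
            ENNReal.ofReal (s ^ (-1:ℝ) * Real.exp (-s ^ 2 / 4)))
            ≤ ∫⁻ s in Ioc (t ^ (-(1/2) : ℝ)) 1, ENNReal.ofReal (s ^ (-1:ℝ)) := by
              apply setLIntegral_mono' measurableSet_Ioc
              intro s hs
              apply ENNReal.ofReal_le_ofReal
              have hexp : Real.exp (-s ^ 2 / 4) ≤ 1 :=
                Real.exp_le_one_iff.mpr (by nlinarith [sq_nonneg s])
              exact mul_le_of_le_one_right (rpow_nonneg (hσ0.trans hs.1).le _) hexp
          _ = ENNReal.ofReal (∫ s in Ioc (t ^ (-(1/2) : ℝ)) 1, s ^ (-1:ℝ)) :=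
              (ofReal_integral_eq_lintegral_ofReal hint
                (by filter_upwards [ae_restrict_mem measurableSet_Ioc] with s hs using
                  rpow_nonneg (hσ0.trans hs.1).le _)).symm
          _ ≤ ENNReal.ofReal ((1/2) * Real.log t) := by
              apply ENNReal.ofReal_le_ofReal
              rw [← intervalIntegral.integral_of_le hσ1]
              simp only [Real.rpow_neg_one]
              rw [integral_inv (notMem_uIcc_of_lt hσ0 one_pos), one_div,
                Real.log_inv, Real.log_rpow ht0]
              apply le_of_eq; ring
      have hTb : (∫⁻ s in Ioi (1:ℝ),
          ENNReal.ofReal (s ^ (-1:ℝ) * Real.exp (-s ^ 2 / 4)))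
          ≤ ENNReal.ofReal D2 := by
        calc (∫⁻ s in Ioi (1:ℝ), ENNReal.ofReal (s ^ (-1:ℝ) * Real.exp (-s ^ 2 / 4)))
            ≤ ∫⁻ s in Ioi (1:ℝ), ENNReal.ofReal (Real.exp (-s ^ 2 / 4)) := by
              apply setLIntegral_mono' measurableSet_Ioi
              intro s hs
              apply ENNReal.ofReal_le_ofReal
              exact mul_le_of_le_one_left (exp_pos _).le
                (rpow_le_one_of_one_le_of_nonpos hs.le (by norm_num))
          _ ≤ ∫⁻ s in Ioi (0:ℝ), ENNReal.ofReal (Real.exp (-s ^ 2 / 4)) :=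
              lintegral_mono_set (Ioi_subset_Ioi zero_le_one)
          _ = ENNReal.ofReal D2 := hD2lint
      calc (∫⁻ s in Ioc (t ^ (-(1/2) : ℝ)) 1,
            ENNReal.ofReal (s ^ (-1:ℝ) * Real.exp (-s ^ 2 / 4)))
          + ∫⁻ s in Ioi (1:ℝ), ENNReal.ofReal (s ^ (-1:ℝ) * Real.exp (-s ^ 2 / 4))
          ≤ ENNReal.ofReal ((1/2) * Real.log t) + ENNReal.ofReal D2 := add_le_add hTa hTb
        _ = ENNReal.ofReal ((1/2) * Real.log t + D2) :=
            (ENNReal.ofReal_add (by positivity) hD2nn).symm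
    have h := hchain t ht ((1/2) * Real.log t + D2) hPP htail
    refine h.trans ?_
    have hA0 : 0 ≤ t ^ ((γ - (n:ℝ)) / 2) := rpow_nonneg ht0.le _
    have hti : (0:ℝ) ≤ t⁻¹ := by positivity
    nlinarith [mul_nonneg hc1.le hti, mul_nonneg hc1.le (mul_nonneg hti hlog),
      mul_nonneg (mul_nonneg hc2.le hD2nn) hA0, mul_nonneg hc2.le hA0,
      mul_nonneg hc2.le (mul_nonneg hti hlog), mul_nonneg hc2.le hti,
      mul_nonneg (mul_nonneg hc2.le hD2nn) (mul_nonneg hti hlog),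
      mul_nonneg (mul_nonneg hc2.le hD2nn) hti,
      mul_nonneg (mul_nonneg hc2.le hA0) hlog, mul_nonneg hA0 hti,
      mul_nonneg hti hlog]
  · -- n - 2 < γ
    have ha : (0:ℝ) < γ + 2 - n := by linarith
    refine ⟨c1 + c2 * (1 / (γ + 2 - n) + D2) + 1, by positivity, ?_⟩
    intro t ht
    have ht0 : (0:ℝ) < t := by linarith
    have hσ0 : (0:ℝ) < t ^ (-(1/2):ℝ) := rpow_pos_of_pos ht0 _
    have hσ1 : t ^ (-(1/2):ℝ) ≤ 1 := rpow_le_one_of_one_le_of_nonpos ht (by norm_num)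
    rw [if_neg (by linarith), if_neg (by intro h; rw [h] at hcase; exact lt_irrefl _ hcase)]
    set σ : ℝ := t ^ (-(1/2):ℝ) with hσdef
    set a : ℝ := (n:ℝ) - 2 - γ with hadef
    have ha0 : a < 0 := by rw [hadef]; linarith
    have hσa1 : 1 ≤ σ ^ a := one_le_rpow_of_pos_of_le_one_of_nonpos hσ0 hσ1 ha0.le
    have hσa0 : (0:ℝ) ≤ σ ^ a := by linarith
    have hcc : (0:ℝ) ≤ 1 / (γ + 2 - n) + D2 := by positivity
    have hPP : 0 ≤ σ ^ a * (1 / (γ + 2 - n) + D2) := mul_nonneg hσa0 hcc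
    have hr3 : (n:ℝ) - 3 - γ = a - 1 := by rw [hadef]; ring
    have hr3ne : a - 1 ≠ -1 := by intro h; rw [hadef] at h; linarith
    have htail : (∫⁻ s in Ioi σ,
        ENNReal.ofReal (s ^ ((n:ℝ) - 3 - γ) * Real.exp (-s ^ 2 / 4)))
        ≤ ENNReal.ofReal (σ ^ a * (1 / (γ + 2 - n) + D2)) := by
      rw [hr3, ← Ioc_union_Ioi_eq_Ioi hσ1,
        lintegral_union measurableSet_Ioi (Ioc_disjoint_Ioi le_rfl)]
      have hTa : (∫⁻ s in Ioc σ 1, ENNReal.ofReal (s ^ (a - 1) * Real.exp (-s ^ 2 / 4)))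
          ≤ ENNReal.ofReal (σ ^ a * (1 / (γ + 2 - n))) := by
        have hint : IntegrableOn (fun s : ℝ => s ^ (a - 1)) (Ioc σ 1) :=
          (intervalIntegrable_iff_integrableOn_Ioc_of_le hσ1).mp
            (intervalIntegral.intervalIntegrable_rpow
              (Or.inr (notMem_uIcc_of_lt hσ0 one_pos)))
        calc (∫⁻ s in Ioc σ 1, ENNReal.ofReal (s ^ (a - 1) * Real.exp (-s ^ 2 / 4)))
            ≤ ∫⁻ s in Ioc σ 1, ENNReal.ofReal (s ^ (a - 1)) := by
              apply setLIntegral_mono' measurableSet_Ioc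
              intro s hs
              apply ENNReal.ofReal_le_ofReal
              have hexp : Real.exp (-s ^ 2 / 4) ≤ 1 :=
                Real.exp_le_one_iff.mpr (by nlinarith [sq_nonneg s])
              exact mul_le_of_le_one_right (rpow_nonneg (hσ0.trans hs.1).le _) hexp
          _ = ENNReal.ofReal (∫ s in Ioc σ 1, s ^ (a - 1)) :=
              (ofReal_integral_eq_lintegral_ofReal hint
                (by filter_upwards [ae_restrict_mem measurableSet_Ioc] with s hs using
                  rpow_nonneg (hσ0.trans hs.1).le _)).symm
          _ ≤ ENNReal.ofReal (σ ^ a * (1 / (γ + 2 - n))) := by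
              apply ENNReal.ofReal_le_ofReal
              rw [← intervalIntegral.integral_of_le hσ1,
                integral_rpow (Or.inr ⟨hr3ne, notMem_uIcc_of_lt hσ0 one_pos⟩),
                show a - 1 + 1 = a by ring, Real.one_rpow]
              have e : (1 - σ ^ a) / a = (σ ^ a - 1) / (γ + 2 - n) := by
                rw [hadef, div_eq_div_iff (by linarith) (by linarith)]; ring
              rw [e]
              calc (σ ^ a - 1) / (γ + 2 - n) ≤ σ ^ a / (γ + 2 - n) := by gcongr; linarith
                _ = σ ^ a * (1 / (γ + 2 - n)) := by ring
      have hTb : (∫⁻ s in Ioi (1:ℝ),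
          ENNReal.ofReal (s ^ (a - 1) * Real.exp (-s ^ 2 / 4)))
          ≤ ENNReal.ofReal (σ ^ a * D2) := by
        calc (∫⁻ s in Ioi (1:ℝ), ENNReal.ofReal (s ^ (a - 1) * Real.exp (-s ^ 2 / 4)))
            ≤ ∫⁻ s in Ioi (1:ℝ), ENNReal.ofReal (Real.exp (-s ^ 2 / 4)) := by
              apply setLIntegral_mono' measurableSet_Ioi
              intro s hs
              apply ENNReal.ofReal_le_ofReal
              exact mul_le_of_le_one_left (exp_pos _).le
                (rpow_le_one_of_one_le_of_nonpos hs.le (by linarith))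
          _ ≤ ∫⁻ s in Ioi (0:ℝ), ENNReal.ofReal (Real.exp (-s ^ 2 / 4)) :=
              lintegral_mono_set (Ioi_subset_Ioi zero_le_one)
          _ = ENNReal.ofReal D2 := hD2lint
          _ ≤ ENNReal.ofReal (σ ^ a * D2) :=
              ENNReal.ofReal_le_ofReal (le_mul_of_one_le_left hD2nn hσa1)
      calc (∫⁻ s in Ioc σ 1, ENNReal.ofReal (s ^ (a - 1) * Real.exp (-s ^ 2 / 4)))
          + ∫⁻ s in Ioi (1:ℝ), ENNReal.ofReal (s ^ (a - 1) * Real.exp (-s ^ 2 / 4))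
          ≤ ENNReal.ofReal (σ ^ a * (1 / (γ + 2 - n))) + ENNReal.ofReal (σ ^ a * D2) :=
            add_le_add hTa hTb
        _ = ENNReal.ofReal (σ ^ a * (1 / (γ + 2 - n) + D2)) := by
            rw [← ENNReal.ofReal_add (by positivity) (mul_nonneg hσa0 hD2nn)]
            congr 1; ring
    have h := hchain t ht (σ ^ a * (1 / (γ + 2 - n) + D2)) hPP htail
    refine h.trans ?_
    have hA0 : 0 ≤ t ^ ((γ - (n:ℝ)) / 2) := rpow_nonneg ht0.le _
    have hkey : t⁻¹ * σ ^ a = t ^ ((γ - (n:ℝ)) / 2) := by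
      have hε : σ ^ 2 = t⁻¹ := by
        rw [hσdef, ← Real.rpow_natCast (t ^ (-(1/2):ℝ)) 2, ← Real.rpow_mul ht0.le,
          show (-(1/2):ℝ) * (2:ℕ) = -1 by push_cast; ring, Real.rpow_neg_one]
      rw [← hε, ← Real.rpow_natCast σ 2, ← Real.rpow_add hσ0, hσdef,
        ← Real.rpow_mul ht0.le]
      congr 1
      rw [hadef]; push_cast; ring
    have expand : c2 * t⁻¹ * (σ ^ a * (1 / (γ + 2 - n) + D2))
        = c2 * (1 / (γ + 2 - n) + D2) * (t⁻¹ * σ ^ a) := by ring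
    rw [expand, hkey]
    nlinarith [mul_nonneg hc1.le hA0, mul_nonneg (mul_nonneg hc2.le hcc) hA0, hA0]
end

section
/- For n > 0 and t ≥ 1, the integral (4πt)^(-n/2) ∫_{|y| ≥ √t} e^(-|y|²/(4t)) ⟨y⟩^(-n) dy is comparable to t^(-n/2); that is, there exist constants c, C > 0 depending only on n such that c t^(-n/2) ≤ (4πt)^(-n/2) ∫_{|y| ≥ √t} e^(-|y|²/(4t)) ⟨y⟩^(-n) dy ≤ C t^(-n/2) for all t ≥ 1. -/
open MeasureTheory Real

theorem outer_region_comparable (n : ℕ) (hn : 0 < n) :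
    ∃ c C : ℝ, 0 < c ∧ 0 < C ∧ ∀ t ≥ (1 : ℝ),
      c * t ^ (-(n : ℝ) / 2)
        ≤ (4 * π * t) ^ (-(n : ℝ) / 2)
          * (∫ y in {y : EuclideanSpace ℝ (Fin n) | Real.sqrt t ≤ ‖y‖},
              Real.exp (-‖y‖ ^ 2 / (4 * t)) * Real.sqrt (1 + ‖y‖ ^ 2) ^ (-(n : ℝ)))
      ∧ (4 * π * t) ^ (-(n : ℝ) / 2)
          * (∫ y in {y : EuclideanSpace ℝ (Fin n) | Real.sqrt t ≤ ‖y‖},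
              Real.exp (-‖y‖ ^ 2 / (4 * t)) * Real.sqrt (1 + ‖y‖ ^ 2) ^ (-(n : ℝ)))
        ≤ C * t ^ (-(n : ℝ) / 2) := by
  classical
  set E := EuclideanSpace ℝ (Fin n)
  have hπ : (0:ℝ) < π := Real.pi_pos
  set v₁ : ℝ := (volume (Metric.ball (0:E) 1)).toReal with hv₁
  have hv₁pos : 0 < v₁ := by
    apply ENNReal.toReal_pos
    · exact (Metric.measure_ball_pos volume 0 one_pos).ne'
    · exact measure_ball_lt_top.ne
  refine ⟨Real.exp (-1) * (4*π) ^ (-(n:ℝ)/2) * 5 ^ (-(n:ℝ)/2) * (1/2 : ℝ)^n * v₁, 1,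
    by positivity, one_pos, ?_⟩
  intro t ht
  have ht0 : (0:ℝ) < t := lt_of_lt_of_le one_pos ht
  have hst : (0:ℝ) < Real.sqrt t := Real.sqrt_pos.mpr ht0
  have hb : (0:ℝ) < 1/(4*t) := by positivity
  set f : E → ℝ := fun y => Real.exp (-‖y‖ ^ 2 / (4 * t)) * Real.sqrt (1 + ‖y‖ ^ 2) ^ (-(n : ℝ))
    with hf
  set g : E → ℝ := fun y => Real.exp (-(1/(4*t)) * ‖y‖ ^ 2) with hg
  have hge : ∀ y : E, Real.exp (-‖y‖ ^ 2 / (4 * t)) = g y := by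
    intro y; simp only [hg]; ring_nf
  have hgint : Integrable g := by
    by_contra hcon
    have h0 := integral_undef hcon
    rw [hg, GaussianFourier.integral_rexp_neg_mul_sq_norm hb] at h0
    exact (Real.rpow_pos_of_pos (by positivity) _).ne' h0
  have hgval : ∫ y : E, g y = (4*π*t) ^ ((n:ℝ)/2) := by
    rw [hg, GaussianFourier.integral_rexp_neg_mul_sq_norm hb]
    rw [show (Module.finrank ℝ E : ℝ) = (n:ℝ) by
      rw [show Module.finrank ℝ E = n from finrank_euclideanSpace_fin]]
    congr 1
    field_simp
  have hsq : ∀ y : E, (0:ℝ) < Real.sqrt (1 + ‖y‖ ^ 2) := by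
    intro y; positivity
  have hfcont : Continuous f := by
    apply Continuous.mul
    · exact (Continuous.div_const (continuous_norm.pow 2).neg _).rexp
    · apply Continuous.rpow_const
      · exact ((continuous_const.add (continuous_norm.pow 2)).sqrt)
      · intro y; exact Or.inl (hsq y).ne'
  have hfnonneg : ∀ y : E, 0 ≤ f y := by
    intro y; rw [hf]; positivity
  have hfle : ∀ y : E, f y ≤ g y := by
    intro y
    show Real.exp (-‖y‖ ^ 2 / (4 * t)) * Real.sqrt (1 + ‖y‖ ^ 2) ^ (-(n : ℝ))
      ≤ Real.exp (-(1/(4*t)) * ‖y‖ ^ 2)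
    rw [show (-(1/(4*t)) * ‖y‖ ^ 2 : ℝ) = -‖y‖ ^ 2 / (4 * t) by ring]
    have h1 : Real.sqrt (1 + ‖y‖ ^ 2) ^ (-(n:ℝ)) ≤ 1 :=
      Real.rpow_le_one_of_one_le_of_nonpos
        (by nlinarith [Real.sq_sqrt (show (0:ℝ) ≤ 1+‖y‖^2 by positivity),
              Real.sqrt_nonneg (1+‖y‖^2), sq_nonneg ‖y‖])
        (by simp)
    nlinarith [Real.exp_pos (-‖y‖ ^ 2 / (4 * t)), Real.rpow_nonneg (Real.sqrt_nonneg (1 + ‖y‖^2)) (-(n:ℝ))]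
  have hfint : Integrable f := by
    apply hgint.mono' hfcont.aestronglyMeasurable
    filter_upwards with y
    rw [Real.norm_of_nonneg (hfnonneg y)]
    exact hfle y
  set S : Set E := {y : E | Real.sqrt t ≤ ‖y‖} with hS
  have hSmeas : MeasurableSet S := measurableSet_le measurable_const measurable_norm
  -- key rpow identities
  have hXY : t ^ (-(n:ℝ)/2) * t ^ ((n:ℝ)/2) = 1 := by
    rw [← Real.rpow_add ht0, show -(n:ℝ)/2 + (n:ℝ)/2 = 0 by ring, Real.rpow_zero]
  have hsqrt_pow : (Real.sqrt t) ^ n = t ^ ((n:ℝ)/2) := by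
    rw [← Real.rpow_natCast (Real.sqrt t) n, Real.sqrt_eq_rpow, ← Real.rpow_mul ht0.le]
    congr 1; ring
  have hsqrt_rpow : (Real.sqrt t) ^ (-(n:ℝ)) = t ^ (-(n:ℝ)/2) := by
    rw [Real.sqrt_eq_rpow, ← Real.rpow_mul ht0.le]
    congr 1; ring
  constructor
  · -- lower bound
    have hi : Fin n := ⟨0, hn⟩
    set y₀ : E := EuclideanSpace.single hi ((3/2) * Real.sqrt t) with hy₀def
    have hy₀ : ‖y₀‖ = (3/2) * Real.sqrt t := by
      rw [hy₀def, EuclideanSpace.norm_single]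
      exact abs_of_nonneg (by positivity)
    set A : Set E := Metric.closedBall y₀ (Real.sqrt t / 2) with hA
    have hAS : A ⊆ S := by
      intro y hy
      rw [hA, Metric.mem_closedBall, dist_eq_norm] at hy
      rw [hS, Set.mem_setOf_eq]
      have h2 : ‖y₀‖ - ‖y‖ ≤ ‖y₀ - y‖ := norm_sub_norm_le y₀ y
      rw [norm_sub_rev] at h2
      linarith [hy₀, h2, hy]
    have hAub : ∀ y ∈ A, ‖y‖ ≤ 2 * Real.sqrt t := by
      intro y hy
      rw [hA, Metric.mem_closedBall, dist_eq_norm] at hy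
      calc ‖y‖ = ‖y₀ + (y - y₀)‖ := by rw [add_sub_cancel]
        _ ≤ ‖y₀‖ + ‖y - y₀‖ := norm_add_le _ _
        _ ≤ (3/2) * Real.sqrt t + Real.sqrt t / 2 := by rw [hy₀]; linarith
        _ = 2 * Real.sqrt t := by ring
    have hptwise : ∀ y ∈ A, Real.exp (-1) * (5*t) ^ (-(n:ℝ)/2) ≤ f y := by
      intro y hy
      have hyub := hAub y hy
      have h1 : Real.exp (-1) ≤ Real.exp (-‖y‖ ^ 2 / (4 * t)) := by
        apply Real.exp_le_exp.mpr
        rw [neg_div, neg_le_neg_iff, div_le_one (by positivity)]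
        nlinarith [Real.sq_sqrt ht0.le, norm_nonneg y, hst]
      have h2 : (5*t) ^ (-(n:ℝ)/2) ≤ Real.sqrt (1 + ‖y‖ ^ 2) ^ (-(n:ℝ)) := by
        have hle : Real.sqrt (1 + ‖y‖ ^ 2) ≤ Real.sqrt (5*t) := by
          apply Real.sqrt_le_sqrt
          nlinarith [Real.sq_sqrt ht0.le, norm_nonneg y]
        have := Real.rpow_le_rpow_of_nonpos (hsq y) hle
          (by simp : (-(n:ℝ)) ≤ 0)
        calc (5*t) ^ (-(n:ℝ)/2) = (Real.sqrt (5*t)) ^ (-(n:ℝ)) := by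
              rw [Real.sqrt_eq_rpow, ← Real.rpow_mul (by positivity)]
              congr 1; ring
          _ ≤ _ := this
      show _ ≤ Real.exp (-‖y‖ ^ 2 / (4 * t)) * Real.sqrt (1 + ‖y‖ ^ 2) ^ (-(n : ℝ))
      exact mul_le_mul h1 h2 (Real.rpow_nonneg (by positivity) _) (Real.exp_pos _).le
    have hAmeas : MeasurableSet A := measurableSet_closedBall
    have hAfin : volume A ≠ ⊤ := measure_closedBall_lt_top.ne
    have hvolA : (volume A).toReal = (Real.sqrt t / 2) ^ n * v₁ := by
      rw [hA, Measure.addHaar_closedBall volume y₀ (by positivity)]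
      rw [show Module.finrank ℝ E = n from finrank_euclideanSpace_fin]
      rw [ENNReal.toReal_mul, ENNReal.toReal_ofReal (by positivity)]
    have hlow1 : Real.exp (-1) * (5*t) ^ (-(n:ℝ)/2) * ((Real.sqrt t / 2) ^ n * v₁)
        ≤ ∫ y in S, f y := by
      calc Real.exp (-1) * (5*t) ^ (-(n:ℝ)/2) * ((Real.sqrt t / 2) ^ n * v₁)
          = (Real.exp (-1) * (5*t) ^ (-(n:ℝ)/2)) * (volume A).toReal := by rw [hvolA]
        _ ≤ ∫ y in A, f y :=
            setIntegral_ge_of_const_le_real hAmeas hAfin hptwise hfint.integrableOn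
        _ ≤ ∫ y in S, f y := by
            apply setIntegral_mono_set hfint.integrableOn
            · filter_upwards with y using hfnonneg y
            · exact HasSubset.Subset.eventuallyLE hAS
    have h5 : (5*t:ℝ) ^ (-(n:ℝ)/2) = 5 ^ (-(n:ℝ)/2) * t ^ (-(n:ℝ)/2) :=
      Real.mul_rpow (by norm_num) ht0.le
    have h4π : (4*π*t:ℝ) ^ (-(n:ℝ)/2) = (4*π) ^ (-(n:ℝ)/2) * t ^ (-(n:ℝ)/2) :=
      Real.mul_rpow (by positivity) ht0.le
    have hhalf : (Real.sqrt t / 2) ^ n = (1/2:ℝ)^n * t ^ ((n:ℝ)/2) := by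
      rw [div_eq_mul_one_div, mul_pow, hsqrt_pow]; ring
    have hmul := mul_le_mul_of_nonneg_left hlow1
      (Real.rpow_nonneg (by positivity : (0:ℝ) ≤ 4*π*t) (-(n:ℝ)/2))
    calc Real.exp (-1) * (4*π) ^ (-(n:ℝ)/2) * 5 ^ (-(n:ℝ)/2) * (1/2:ℝ)^n * v₁ * t ^ (-(n:ℝ)/2)
        = (4*π*t) ^ (-(n:ℝ)/2) *
            (Real.exp (-1) * (5*t) ^ (-(n:ℝ)/2) * ((Real.sqrt t / 2) ^ n * v₁)) := by
          rw [h5, h4π, hhalf]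
          linear_combination (-(Real.exp (-1) * (4*π) ^ (-(n:ℝ)/2) * 5 ^ (-(n:ℝ)/2)
            * (1/2:ℝ)^n * v₁ * t ^ (-(n:ℝ)/2))) * hXY
      _ ≤ _ := hmul
  · -- upper bound
    have hup1 : ∫ y in S, f y ≤ t ^ (-(n:ℝ)/2) * (4*π*t) ^ ((n:ℝ)/2) := by
      calc ∫ y in S, f y ≤ ∫ y in S, t ^ (-(n:ℝ)/2) * g y := by
            apply setIntegral_mono_on hfint.integrableOn
              (hgint.const_mul _).integrableOn hSmeas
            intro y hy
            rw [hS, Set.mem_setOf_eq] at hy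
            have h1 : Real.sqrt (1 + ‖y‖ ^ 2) ^ (-(n:ℝ)) ≤ t ^ (-(n:ℝ)/2) := by
              rw [← hsqrt_rpow]
              apply Real.rpow_le_rpow_of_nonpos hst _ (by simp)
              calc Real.sqrt t ≤ ‖y‖ := hy
                _ = Real.sqrt (‖y‖^2) := (Real.sqrt_sq (norm_nonneg y)).symm
                _ ≤ Real.sqrt (1 + ‖y‖^2) := Real.sqrt_le_sqrt (by linarith)
            show Real.exp (-‖y‖ ^ 2 / (4 * t)) * Real.sqrt (1 + ‖y‖ ^ 2) ^ (-(n : ℝ))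
              ≤ t ^ (-(n:ℝ)/2) * g y
            rw [show g y = Real.exp (-‖y‖ ^ 2 / (4 * t)) from (hge y).symm]
            nlinarith [Real.exp_pos (-‖y‖^2 / (4*t)),
              Real.rpow_nonneg (Real.sqrt_nonneg (1 + ‖y‖^2)) (-(n:ℝ))]
        _ ≤ ∫ y, t ^ (-(n:ℝ)/2) * g y := by
            apply setIntegral_le_integral (hgint.const_mul _)
            filter_upwards with y
            have h0 := (Real.exp_pos (-(1/(4*t)) * ‖y‖^2)).le
            have h0' : 0 ≤ g y := h0
            positivity
        _ = t ^ (-(n:ℝ)/2) * (4*π*t) ^ ((n:ℝ)/2) := by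
            rw [integral_const_mul, hgval]
    have h1 : (4*π*t:ℝ) ^ (-(n:ℝ)/2) * (4*π*t) ^ ((n:ℝ)/2) = 1 := by
      rw [← Real.rpow_add (show (0:ℝ) < 4*π*t by positivity),
        show -(n:ℝ)/2 + (n:ℝ)/2 = 0 by ring, Real.rpow_zero]
    have hmul := mul_le_mul_of_nonneg_left hup1
      (Real.rpow_nonneg (by positivity : (0:ℝ) ≤ 4*π*t) (-(n:ℝ)/2))
    calc (4*π*t) ^ (-(n:ℝ)/2) * (∫ y in S, f y)
        ≤ (4*π*t) ^ (-(n:ℝ)/2) * (t ^ (-(n:ℝ)/2) * (4*π*t) ^ ((n:ℝ)/2)) := hmul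
      _ = 1 * t ^ (-(n:ℝ)/2) := by
          linear_combination (t ^ (-(n:ℝ)/2)) * h1
end

section
/- Let n > 0, A > 0, and b ∈ ℝ. There exists C > 0 such that for all x ∈ ℝⁿ, | ∫_{ℝⁿ} e^(-A|x−y|²) ⟨y⟩^(-b) dy − ⟨x⟩^(-b) ∫_{ℝⁿ} e^(-A|z|²) dz | ≤ C ( |x| ⟨x⟩^(-b-2) ( |x|^{n+1} 1_{|x|≤1} + 1_{|x|>1} ) + ∫_{|z| > |x|/2} e^(-A|z|²) (|z| + ⟨x⟩)^{max{0,−b}} dz ). -/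
open MeasureTheory Real

set_option maxHeartbeats 1000000

lemma GCE.mvt_rpow (p : ℝ) {l r s t : ℝ} (hl : 0 < l) (hs : s ∈ Set.Icc l r)
    (ht : t ∈ Set.Icc l r) :
    |s ^ p - t ^ p| ≤ |p| * max (l ^ (p - 1)) (r ^ (p - 1)) * |s - t| := by
  have hconv : Convex ℝ (Set.Icc l r) := convex_Icc l r
  have hder : ∀ u ∈ Set.Icc l r, HasDerivWithinAt (fun u : ℝ => u ^ p)
      (p * u ^ (p - 1)) (Set.Icc l r) u := by
    intro u hu
    exact (Real.hasDerivAt_rpow_const (Or.inl (ne_of_gt (lt_of_lt_of_le hl hu.1)))).hasDerivWithinAt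
  have bound : ∀ u ∈ Set.Icc l r, ‖p * u ^ (p - 1)‖ ≤ |p| * max (l ^ (p - 1)) (r ^ (p - 1)) := by
    intro u hu
    have hu0 : (0:ℝ) < u := lt_of_lt_of_le hl hu.1
    rw [norm_mul, Real.norm_eq_abs, Real.norm_eq_abs, abs_of_nonneg (Real.rpow_nonneg hu0.le _)]
    apply mul_le_mul_of_nonneg_left _ (abs_nonneg p)
    rcases le_or_gt 0 (p - 1) with h | h
    · exact le_max_of_le_right (Real.rpow_le_rpow hu0.le hu.2 h)
    · exact le_max_of_le_left (Real.rpow_le_rpow_of_nonpos hl hu.1 h.le)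
  have := hconv.norm_image_sub_le_of_norm_hasDerivWithin_le hder bound ht hs
  simpa [Real.norm_eq_abs] using this

lemma GCE.sqrt_rpow_eq {w q : ℝ} (hw : 0 ≤ w) :
    Real.sqrt w ^ q = w ^ (q / 2) := by
  rw [Real.sqrt_eq_rpow, ← Real.rpow_mul hw]
  ring_nf

lemma GCE.near {E : Type*} [NormedAddCommGroup E] (b : ℝ) :
    ∃ K > 0, ∀ x z : E, ‖z‖ ≤ ‖x‖ / 2 →
      |Real.sqrt (1 + ‖x - z‖ ^ 2) ^ (-b) - Real.sqrt (1 + ‖x‖ ^ 2) ^ (-b)|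
        ≤ K * (‖x‖ * ‖z‖) * Real.sqrt (1 + ‖x‖ ^ 2) ^ (-b - 2) := by
  set p : ℝ := -b / 2 with hp
  set M : ℝ := max ((1/4 : ℝ) ^ (p - 1)) ((9/4 : ℝ) ^ (p - 1)) with hM
  have hM0 : 0 < M := lt_max_of_lt_left (Real.rpow_pos_of_pos (by norm_num) _)
  refine ⟨5/2 * (|p| * M) + 1, by positivity, ?_⟩
  intro x z hz
  have hx0 : (0:ℝ) ≤ ‖x‖ := norm_nonneg x
  have hz0 : (0:ℝ) ≤ ‖z‖ := norm_nonneg z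
  have hxz1 : ‖x‖ - ‖z‖ ≤ ‖x - z‖ := norm_sub_norm_le x z
  have hxz2 : ‖x - z‖ ≤ ‖x‖ + ‖z‖ := norm_sub_le x z
  have hxz0 : (0:ℝ) ≤ ‖x - z‖ := norm_nonneg _
  set s : ℝ := 1 + ‖x - z‖ ^ 2 with hs
  set t : ℝ := 1 + ‖x‖ ^ 2 with htd
  set l : ℝ := 1 + ‖x‖ ^ 2 / 4 with hl
  set r : ℝ := 1 + 9 * ‖x‖ ^ 2 / 4 with hr
  have hs0 : (0:ℝ) ≤ s := by positivity
  have ht0 : (0:ℝ) < t := by positivity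
  have hl0 : (0:ℝ) < l := by positivity
  have hsmem : s ∈ Set.Icc l r := by
    constructor
    · have : ‖x‖ / 2 ≤ ‖x - z‖ := by linarith
      simp only [hs, hl]
      nlinarith
    · simp only [hs, hr]
      nlinarith
  have htmem : t ∈ Set.Icc l r := by
    constructor
    · simp only [htd, hl]; nlinarith
    · simp only [htd, hr]; nlinarith
  have h1 := GCE.mvt_rpow p hl0 hsmem htmem
  have hst : |s - t| ≤ 5/2 * (‖x‖ * ‖z‖) := by
    rw [abs_le]
    constructor <;> simp only [hs, htd] <;> nlinarith
  have hlt : t / 4 ≤ l := by simp only [hl, htd]; nlinarith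
  have hrt : r ≤ 9/4 * t := by simp only [hr, htd]; nlinarith
  have hq14 : ((1/4 : ℝ) * t) ^ (p - 1) = (1/4 : ℝ) ^ (p-1) * t ^ (p-1) :=
    Real.mul_rpow (by norm_num) ht0.le
  have hq94 : ((9/4 : ℝ) * t) ^ (p - 1) = (9/4 : ℝ) ^ (p-1) * t ^ (p-1) :=
    Real.mul_rpow (by norm_num) ht0.le
  have ht1 : (0:ℝ) ≤ t ^ (p - 1) := Real.rpow_nonneg ht0.le _
  have hmax : max (l ^ (p-1)) (r ^ (p-1)) ≤ M * t ^ (p-1) := by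
    rcases le_or_gt 0 (p - 1) with h | h
    · apply max_le
      · calc l ^ (p-1) ≤ ((9/4:ℝ) * t) ^ (p-1) := by
              apply Real.rpow_le_rpow hl0.le _ h
              calc l ≤ r := hsmem.1.trans hsmem.2
                _ ≤ 9/4 * t := hrt
          _ = (9/4:ℝ)^(p-1) * t^(p-1) := hq94
          _ ≤ M * t ^ (p-1) := by
              apply mul_le_mul_of_nonneg_right (le_max_right _ _) ht1
      · calc r ^ (p-1) ≤ ((9/4:ℝ) * t) ^ (p-1) := Real.rpow_le_rpow (hl0.trans_le (hsmem.1.trans hsmem.2)).le hrt h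
          _ = (9/4:ℝ)^(p-1) * t^(p-1) := hq94
          _ ≤ M * t ^ (p-1) := mul_le_mul_of_nonneg_right (le_max_right _ _) ht1
    · have ht4 : (0:ℝ) < t / 4 := by positivity
      apply max_le
      · calc l ^ (p-1) ≤ (t/4) ^ (p-1) := Real.rpow_le_rpow_of_nonpos ht4 hlt h.le
          _ = ((1/4:ℝ) * t) ^ (p-1) := by ring_nf
          _ = (1/4:ℝ)^(p-1) * t^(p-1) := hq14
          _ ≤ M * t ^ (p-1) := mul_le_mul_of_nonneg_right (le_max_left _ _) ht1
      · calc r ^ (p-1) ≤ (t/4) ^ (p-1) := by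
              apply Real.rpow_le_rpow_of_nonpos ht4 _ h.le
              calc t / 4 ≤ l := hlt
                _ ≤ r := hsmem.1.trans hsmem.2
          _ = ((1/4:ℝ) * t) ^ (p-1) := by ring_nf
          _ = (1/4:ℝ)^(p-1) * t^(p-1) := hq14
          _ ≤ M * t ^ (p-1) := mul_le_mul_of_nonneg_right (le_max_left _ _) ht1
  have key : |s ^ p - t ^ p| ≤ (5/2 * (|p| * M) + 1) * (‖x‖ * ‖z‖) * t ^ (p - 1) := by
    have h2 : |p| * max (l ^ (p-1)) (r ^ (p-1)) * |s - t|
        ≤ |p| * (M * t ^ (p-1)) * (5/2 * (‖x‖ * ‖z‖)) := by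
      apply mul_le_mul (mul_le_mul_of_nonneg_left hmax (abs_nonneg p)) hst (abs_nonneg _)
      positivity
    have hN : (0:ℝ) ≤ ‖x‖ * ‖z‖ := by positivity
    calc |s ^ p - t ^ p| ≤ |p| * (M * t ^ (p-1)) * (5/2 * (‖x‖ * ‖z‖)) := h1.trans h2
      _ = (5/2 * (|p| * M)) * (‖x‖ * ‖z‖) * t ^ (p - 1) := by ring
      _ ≤ (5/2 * (|p| * M) + 1) * (‖x‖ * ‖z‖) * t ^ (p - 1) :=
          mul_le_mul_of_nonneg_right (mul_le_mul_of_nonneg_right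
            (le_add_of_nonneg_right zero_le_one) hN) ht1
  have e1 : Real.sqrt (1 + ‖x - z‖ ^ 2) ^ (-b) = s ^ p := by
    rw [GCE.sqrt_rpow_eq hs0]
  have e2 : Real.sqrt (1 + ‖x‖ ^ 2) ^ (-b) = t ^ p := by
    rw [GCE.sqrt_rpow_eq ht0.le]
  have e3 : Real.sqrt (1 + ‖x‖ ^ 2) ^ (-b - 2) = t ^ (p - 1) := by
    rw [GCE.sqrt_rpow_eq ht0.le]
    congr 1
    simp [hp]; ring
  rw [e1, e2, e3]
  exact key

lemma GCE.one_le_Q {E : Type*} [NormedAddCommGroup E] (x : E) :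
    1 ≤ Real.sqrt (1 + ‖x‖ ^ 2) := by
  nlinarith [Real.sq_sqrt (show (0:ℝ) ≤ 1 + ‖x‖ ^ 2 by positivity),
    Real.sqrt_nonneg (1 + ‖x‖ ^ 2), sq_nonneg ‖x‖]

lemma GCE.norm_le_Q {E : Type*} [NormedAddCommGroup E] (x : E) :
    ‖x‖ ≤ Real.sqrt (1 + ‖x‖ ^ 2) := by
  nlinarith [Real.sq_sqrt (show (0:ℝ) ≤ 1 + ‖x‖ ^ 2 by positivity),
    Real.sqrt_nonneg (1 + ‖x‖ ^ 2), norm_nonneg x]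

lemma GCE.Q_le {E : Type*} [NormedAddCommGroup E] (x : E) :
    Real.sqrt (1 + ‖x‖ ^ 2) ≤ 1 + ‖x‖ := by
  nlinarith [Real.sq_sqrt (show (0:ℝ) ≤ 1 + ‖x‖ ^ 2 by positivity),
    Real.sqrt_nonneg (1 + ‖x‖ ^ 2), norm_nonneg x]

lemma GCE.far {E : Type*} [NormedAddCommGroup E] (b : ℝ) (x z : E) :
    |Real.sqrt (1 + ‖x - z‖ ^ 2) ^ (-b) - Real.sqrt (1 + ‖x‖ ^ 2) ^ (-b)|
      ≤ 2 ^ (max 0 (-b) + 1) * (‖z‖ + Real.sqrt (1 + ‖x‖ ^ 2)) ^ (max 0 (-b)) := by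
  have hQx := GCE.one_le_Q x
  have hQxz := GCE.one_le_Q (x - z)
  have hz0 : (0:ℝ) ≤ ‖z‖ := norm_nonneg z
  have hA0 : (0:ℝ) ≤ Real.sqrt (1 + ‖x - z‖ ^ 2) ^ (-b) :=
    Real.rpow_nonneg (Real.sqrt_nonneg _) _
  have hB0 : (0:ℝ) ≤ Real.sqrt (1 + ‖x‖ ^ 2) ^ (-b) :=
    Real.rpow_nonneg (Real.sqrt_nonneg _) _
  rcases le_or_gt 0 b with hb | hb
  · have hm : max 0 (-b) = 0 := max_eq_left (by linarith)
    rw [hm, zero_add, Real.rpow_one, Real.rpow_zero, mul_one]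
    have h1 : Real.sqrt (1 + ‖x - z‖ ^ 2) ^ (-b) ≤ 1 :=
      Real.rpow_le_one_of_one_le_of_nonpos hQxz (by linarith)
    have h2 : Real.sqrt (1 + ‖x‖ ^ 2) ^ (-b) ≤ 1 :=
      Real.rpow_le_one_of_one_le_of_nonpos hQx (by linarith)
    calc |Real.sqrt (1 + ‖x - z‖ ^ 2) ^ (-b) - Real.sqrt (1 + ‖x‖ ^ 2) ^ (-b)|
        ≤ |Real.sqrt (1 + ‖x - z‖ ^ 2) ^ (-b)| + |Real.sqrt (1 + ‖x‖ ^ 2) ^ (-b)| :=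
          abs_sub _ _
      _ ≤ 2 := by rw [abs_of_nonneg hA0, abs_of_nonneg hB0]; linarith
  · have hm : max 0 (-b) = -b := max_eq_right (by linarith)
    rw [hm]
    have hnb : (0:ℝ) ≤ -b := by linarith
    have hbase : Real.sqrt (1 + ‖x - z‖ ^ 2) ≤ 2 * (‖z‖ + Real.sqrt (1 + ‖x‖ ^ 2)) := by
      have h1 := GCE.Q_le (x - z)
      have h2 : ‖x - z‖ ≤ ‖x‖ + ‖z‖ := norm_sub_le x z
      have h3 := GCE.norm_le_Q x
      linarith
    have hA : Real.sqrt (1 + ‖x - z‖ ^ 2) ^ (-b)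
        ≤ 2 ^ (-b) * (‖z‖ + Real.sqrt (1 + ‖x‖ ^ 2)) ^ (-b) := by
      calc Real.sqrt (1 + ‖x - z‖ ^ 2) ^ (-b)
          ≤ (2 * (‖z‖ + Real.sqrt (1 + ‖x‖ ^ 2))) ^ (-b) :=
            Real.rpow_le_rpow (Real.sqrt_nonneg _) hbase hnb
        _ = 2 ^ (-b) * (‖z‖ + Real.sqrt (1 + ‖x‖ ^ 2)) ^ (-b) :=
            Real.mul_rpow (by norm_num) (by linarith)
    have hB : Real.sqrt (1 + ‖x‖ ^ 2) ^ (-b)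
        ≤ (‖z‖ + Real.sqrt (1 + ‖x‖ ^ 2)) ^ (-b) :=
      Real.rpow_le_rpow (Real.sqrt_nonneg _) (by linarith) hnb
    have h2b : (1:ℝ) ≤ 2 ^ (-b) := Real.one_le_rpow one_le_two hnb
    have hC0 : (0:ℝ) ≤ (‖z‖ + Real.sqrt (1 + ‖x‖ ^ 2)) ^ (-b) :=
      Real.rpow_nonneg (by linarith) _
    have hsum : (2:ℝ) ^ (-b) + 1 ≤ (2:ℝ) ^ (-b + 1) := by
      rw [Real.rpow_add (by norm_num : (0:ℝ) < 2), Real.rpow_one]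
      linarith
    calc |Real.sqrt (1 + ‖x - z‖ ^ 2) ^ (-b) - Real.sqrt (1 + ‖x‖ ^ 2) ^ (-b)|
        ≤ |Real.sqrt (1 + ‖x - z‖ ^ 2) ^ (-b)| + |Real.sqrt (1 + ‖x‖ ^ 2) ^ (-b)| :=
          abs_sub _ _
      _ ≤ 2 ^ (-b) * (‖z‖ + Real.sqrt (1 + ‖x‖ ^ 2)) ^ (-b)
            + (‖z‖ + Real.sqrt (1 + ‖x‖ ^ 2)) ^ (-b) := by
          rw [abs_of_nonneg hA0, abs_of_nonneg hB0]; linarith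
      _ = (2 ^ (-b) + 1) * (‖z‖ + Real.sqrt (1 + ‖x‖ ^ 2)) ^ (-b) := by ring
      _ ≤ 2 ^ (-b + 1) * (‖z‖ + Real.sqrt (1 + ‖x‖ ^ 2)) ^ (-b) :=
          mul_le_mul_of_nonneg_right hsum hC0

lemma GCE.integrable_gauss {n : ℕ} {a : ℝ} (ha : 0 < a) :
    Integrable (fun v : EuclideanSpace ℝ (Fin n) => Real.exp (-a * ‖v‖ ^ 2)) := by
  have h := (GaussianFourier.integrable_cexp_neg_mul_sq_norm_add (V := EuclideanSpace ℝ (Fin n))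
    (b := (a : ℂ)) (by simpa using ha) 0 (0 : EuclideanSpace ℝ (Fin n))).norm
  simpa [Complex.norm_exp, ← Complex.ofReal_pow] using h

lemma GCE.continuous_gauss_poly {n : ℕ} (A c p : ℝ) (hc : 0 < c) :
    Continuous (fun z : EuclideanSpace ℝ (Fin n) =>
      Real.exp (-A * ‖z‖ ^ 2) * (c + ‖z‖) ^ p) := by
  apply Continuous.mul
  · exact Real.continuous_exp.comp (continuous_const.mul (continuous_norm.pow 2))
  · apply Continuous.rpow_const (continuous_const.add continuous_norm)
    intro z
    left
    have := norm_nonneg z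
    show c + ‖z‖ ≠ 0
    exact ne_of_gt (by linarith)

lemma GCE.rpow_growth {A c p : ℝ} (hA : 0 < A) (hc : 0 ≤ c) (hp : 0 ≤ p) {t : ℝ}
    (ht : 0 ≤ t) :
    (c + t) ^ p ≤ (c + 1) ^ p * Real.exp (p ^ 2 / (2 * A)) * Real.exp (A / 2 * t ^ 2) := by
  have he1 : (1:ℝ) ≤ Real.exp (p ^ 2 / (2 * A)) := by
    rw [Real.one_le_exp_iff]; positivity
  have he2 : (1:ℝ) ≤ Real.exp (A / 2 * t ^ 2) := by
    rw [Real.one_le_exp_iff]; positivity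
  have hc1 : (0:ℝ) ≤ (c + 1) ^ p := Real.rpow_nonneg (by linarith) _
  rcases le_or_gt t 1 with h | h
  · calc (c + t) ^ p ≤ (c + 1) ^ p :=
        Real.rpow_le_rpow (by linarith) (by linarith) hp
      _ = (c + 1) ^ p * 1 * 1 := by ring
      _ ≤ (c + 1) ^ p * Real.exp (p ^ 2 / (2 * A)) * Real.exp (A / 2 * t ^ 2) := by
        apply mul_le_mul (mul_le_mul_of_nonneg_left he1 hc1) he2 zero_le_one
        positivity
  · have h1 : c + t ≤ (c + 1) * t := by nlinarith
    have h2 : (c + t) ^ p ≤ ((c + 1) * t) ^ p :=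
      Real.rpow_le_rpow (by linarith) h1 hp
    have h3 : ((c + 1) * t) ^ p = (c + 1) ^ p * t ^ p :=
      Real.mul_rpow (by linarith) ht
    have h4 : t ^ p ≤ Real.exp (t * p) := by
      calc t ^ p ≤ (Real.exp t) ^ p :=
          Real.rpow_le_rpow ht (by linarith [Real.add_one_le_exp t]) hp
        _ = Real.exp (t * p) := (Real.exp_mul t p).symm
    have h5 : t * p ≤ A / 2 * t ^ 2 + p ^ 2 / (2 * A) := by
      rw [← mul_le_mul_iff_right₀ (by positivity : (0:ℝ) < 2 * A)]
      calc 2 * A * (t * p) ≤ A ^ 2 * t ^ 2 + p ^ 2 := by nlinarith [sq_nonneg (A * t - p)]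
        _ = 2 * A * (A / 2 * t ^ 2 + p ^ 2 / (2 * A)) := by field_simp
    have h6 : Real.exp (t * p) ≤ Real.exp (p ^ 2 / (2 * A)) * Real.exp (A / 2 * t ^ 2) := by
      rw [← Real.exp_add]
      exact Real.exp_le_exp.mpr (by linarith)
    calc (c + t) ^ p ≤ (c + 1) ^ p * t ^ p := h3 ▸ h2
      _ ≤ (c + 1) ^ p * (Real.exp (p ^ 2 / (2 * A)) * Real.exp (A / 2 * t ^ 2)) :=
          mul_le_mul_of_nonneg_left (h4.trans h6) hc1
      _ = (c + 1) ^ p * Real.exp (p ^ 2 / (2 * A)) * Real.exp (A / 2 * t ^ 2) := by ring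

lemma GCE.integrable_gauss_poly {n : ℕ} {A : ℝ} (hA : 0 < A) (c p : ℝ) (hc : 1 ≤ c)
    (hp : 0 ≤ p) :
    Integrable (fun z : EuclideanSpace ℝ (Fin n) =>
      Real.exp (-A * ‖z‖ ^ 2) * (c + ‖z‖) ^ p) := by
  have hg : Integrable (fun z : EuclideanSpace ℝ (Fin n) =>
      ((c + 1) ^ p * Real.exp (p ^ 2 / (2 * A))) * Real.exp (-(A / 2) * ‖z‖ ^ 2)) :=
    (GCE.integrable_gauss (half_pos hA)).const_mul _
  apply hg.mono' ((GCE.continuous_gauss_poly A c p (by linarith)).aestronglyMeasurable)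
  filter_upwards with z
  have ht : (0:ℝ) ≤ ‖z‖ := norm_nonneg z
  have hb0 : (0:ℝ) ≤ (c + ‖z‖) ^ p := Real.rpow_nonneg (by linarith) _
  rw [Real.norm_eq_abs, abs_of_nonneg (mul_nonneg (Real.exp_pos _).le hb0)]
  have key := GCE.rpow_growth hA (by linarith : (0:ℝ) ≤ c) hp ht
  calc Real.exp (-A * ‖z‖ ^ 2) * (c + ‖z‖) ^ p
      ≤ Real.exp (-A * ‖z‖ ^ 2) *
        ((c + 1) ^ p * Real.exp (p ^ 2 / (2 * A)) * Real.exp (A / 2 * ‖z‖ ^ 2)) :=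
        mul_le_mul_of_nonneg_left key (Real.exp_pos _).le
    _ = (c + 1) ^ p * Real.exp (p ^ 2 / (2 * A)) * Real.exp (-(A / 2) * ‖z‖ ^ 2) := by
        rw [show Real.exp (-A * ‖z‖ ^ 2) * ((c + 1) ^ p * Real.exp (p ^ 2 / (2 * A)) *
          Real.exp (A / 2 * ‖z‖ ^ 2)) = (c + 1) ^ p * Real.exp (p ^ 2 / (2 * A)) *
          (Real.exp (-A * ‖z‖ ^ 2) * Real.exp (A / 2 * ‖z‖ ^ 2)) by ring, ← Real.exp_add]
        ring_nf

lemma GCE.single_bound {E : Type*} [NormedAddCommGroup E] (b : ℝ) (x z : E) :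
    Real.sqrt (1 + ‖x - z‖ ^ 2) ^ (-b)
      ≤ 2 ^ (max 0 (-b)) * ((Real.sqrt (1 + ‖x‖ ^ 2) + ‖z‖) ^ (max 0 (-b))) := by
  have hz0 : (0:ℝ) ≤ ‖z‖ := norm_nonneg z
  have hQx := GCE.one_le_Q x
  rcases le_or_gt 0 b with hb | hb
  · have hm : max 0 (-b) = 0 := max_eq_left (by linarith)
    rw [hm, Real.rpow_zero, Real.rpow_zero, mul_one]
    exact Real.rpow_le_one_of_one_le_of_nonpos (GCE.one_le_Q _) (by linarith)
  · have hm : max 0 (-b) = -b := max_eq_right (by linarith)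
    rw [hm]
    have hnb : (0:ℝ) ≤ -b := by linarith
    have hbase : Real.sqrt (1 + ‖x - z‖ ^ 2) ≤ 2 * (Real.sqrt (1 + ‖x‖ ^ 2) + ‖z‖) := by
      have h1 : Real.sqrt (1 + ‖x - z‖ ^ 2) ≤ 1 + ‖x - z‖ := by
        nlinarith [Real.sq_sqrt (show (0:ℝ) ≤ 1 + ‖x - z‖ ^ 2 by positivity),
          Real.sqrt_nonneg (1 + ‖x - z‖ ^ 2), norm_nonneg (x - z)]
      have h2 : ‖x - z‖ ≤ ‖x‖ + ‖z‖ := norm_sub_le x z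
      have h3 : ‖x‖ ≤ Real.sqrt (1 + ‖x‖ ^ 2) := by
        nlinarith [Real.sq_sqrt (show (0:ℝ) ≤ 1 + ‖x‖ ^ 2 by positivity),
          Real.sqrt_nonneg (1 + ‖x‖ ^ 2), norm_nonneg x]
      linarith
    calc Real.sqrt (1 + ‖x - z‖ ^ 2) ^ (-b)
        ≤ (2 * (Real.sqrt (1 + ‖x‖ ^ 2) + ‖z‖)) ^ (-b) :=
          Real.rpow_le_rpow (Real.sqrt_nonneg _) hbase hnb
      _ = 2 ^ (-b) * (Real.sqrt (1 + ‖x‖ ^ 2) + ‖z‖) ^ (-b) :=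
          Real.mul_rpow (by norm_num) (by linarith)

theorem gaussian_convolution_expansion (n : ℕ) (hn : 0 < n) (A b : ℝ) (hA : 0 < A) :
    ∃ C > 0, ∀ x : EuclideanSpace ℝ (Fin n),
      |(∫ y : EuclideanSpace ℝ (Fin n),
            Real.exp (-A * ‖x - y‖ ^ 2) * Real.sqrt (1 + ‖y‖ ^ 2) ^ (-b))
        - Real.sqrt (1 + ‖x‖ ^ 2) ^ (-b)
          * ∫ z : EuclideanSpace ℝ (Fin n), Real.exp (-A * ‖z‖ ^ 2)|
      ≤ C * (‖x‖ * Real.sqrt (1 + ‖x‖ ^ 2) ^ (-b - 2)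
            * (if ‖x‖ ≤ 1 then ‖x‖ ^ (n + 1) else 1)
          + ∫ z in {z : EuclideanSpace ℝ (Fin n) | ‖x‖ / 2 < ‖z‖},
              Real.exp (-A * ‖z‖ ^ 2)
                * (‖z‖ + Real.sqrt (1 + ‖x‖ ^ 2)) ^ (max 0 (-b))) := by
  set E := EuclideanSpace ℝ (Fin n)
  set m : ℝ := max 0 (-b) with hm
  have hm0 : 0 ≤ m := le_max_left _ _
  obtain ⟨K, hK, hnear⟩ := GCE.near (E := E) b
  set K₂ : ℝ := 2 ^ (m + 1) with hK₂
  have hK₂0 : 0 < K₂ := Real.rpow_pos_of_pos (by norm_num) _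
  set F : E → ℝ := fun z => Real.exp (-A * ‖z‖ ^ 2) with hF
  have hF0 : ∀ z, 0 < F z := fun z => Real.exp_pos _
  have hFint : Integrable F := GCE.integrable_gauss hA
  have hFn : Integrable (fun z : E => F z * ‖z‖) := by
    apply (GCE.integrable_gauss_poly hA 1 1 le_rfl zero_le_one).mono'
      ((Real.continuous_exp.comp (continuous_const.mul (continuous_norm.pow 2))).mul
        continuous_norm).aestronglyMeasurable
    filter_upwards with z
    simp only [Pi.mul_apply, Function.comp_apply, Pi.pow_apply]
    rw [Real.norm_eq_abs, abs_of_nonneg (mul_nonneg (Real.exp_pos _).le (norm_nonneg z)),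
      Real.rpow_one]
    have := norm_nonneg z
    have := (hF0 z).le
    nlinarith
  set I₁ : ℝ := ∫ z : E, F z * ‖z‖ with hI₁
  have hI₁0 : 0 ≤ I₁ := integral_nonneg fun z => mul_nonneg (hF0 z).le (norm_nonneg z)
  set V : ℝ := (volume (Metric.ball (0 : E) 1)).toReal with hV
  have hV0 : 0 ≤ V := ENNReal.toReal_nonneg
  set C : ℝ := K * (V + I₁ + 1) + K₂ + 1 with hC
  have hC0 : 0 < C := by
    have : 0 < K * (V + I₁ + 1) := mul_pos hK (by linarith)
    linarith
  refine ⟨C, hC0, fun x => ?_⟩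
  set Qx : ℝ := Real.sqrt (1 + ‖x‖ ^ 2) with hQx
  have hQx1 : 1 ≤ Qx := GCE.one_le_Q x
  set D : E → ℝ := fun z => Real.sqrt (1 + ‖x - z‖ ^ 2) ^ (-b) - Qx ^ (-b) with hD
  -- integrability facts
  have hmaj : Integrable (fun z : E => 2 ^ m * (F z * (Qx + ‖z‖) ^ m)) :=
    (GCE.integrable_gauss_poly hA Qx m hQx1 hm0).const_mul _
  have hFg : Integrable (fun z : E => F z * Real.sqrt (1 + ‖x - z‖ ^ 2) ^ (-b)) := by
    apply hmaj.mono'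
    · apply Continuous.aestronglyMeasurable
      apply Continuous.mul
      · exact Real.continuous_exp.comp (continuous_const.mul (continuous_norm.pow 2))
      · apply Continuous.rpow_const
        · exact Real.continuous_sqrt.comp
            (continuous_const.add ((continuous_const.sub continuous_id).norm.pow 2))
        · intro z
          left
          have := GCE.one_le_Q (E := E) (x - z)
          positivity
    · filter_upwards with z
      have h1 : (0:ℝ) ≤ Real.sqrt (1 + ‖x - z‖ ^ 2) ^ (-b) :=
        Real.rpow_nonneg (Real.sqrt_nonneg _) _
      rw [Real.norm_eq_abs, abs_of_nonneg (mul_nonneg (hF0 z).le h1)]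
      calc F z * Real.sqrt (1 + ‖x - z‖ ^ 2) ^ (-b)
          ≤ F z * (2 ^ m * ((Qx + ‖z‖) ^ m)) :=
            mul_le_mul_of_nonneg_left (GCE.single_bound b x z) (hF0 z).le
        _ = 2 ^ m * (F z * (Qx + ‖z‖) ^ m) := by ring
  have hFc : Integrable (fun z : E => F z * Qx ^ (-b)) := hFint.mul_const _
  have hFD : Integrable (fun z : E => F z * D z) := by
    have := hFg.sub hFc
    refine this.congr (Filter.Eventually.of_forall fun z => ?_)
    simp [hD, mul_sub]
  -- change of variables
  have h0 : (∫ y : E, Real.exp (-A * ‖x - y‖ ^ 2) * Real.sqrt (1 + ‖y‖ ^ 2) ^ (-b))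
      = ∫ z : E, F z * Real.sqrt (1 + ‖x - z‖ ^ 2) ^ (-b) := by
    rw [← integral_sub_left_eq_self
      (fun z : E => F z * Real.sqrt (1 + ‖x - z‖ ^ 2) ^ (-b)) volume x]
    congr 1
    funext y
    rw [sub_sub_cancel]
  have h1 : (∫ y : E, Real.exp (-A * ‖x - y‖ ^ 2) * Real.sqrt (1 + ‖y‖ ^ 2) ^ (-b))
      - Qx ^ (-b) * ∫ z : E, Real.exp (-A * ‖z‖ ^ 2) = ∫ z : E, F z * D z := by
    rw [h0]
    have h2 : Qx ^ (-b) * ∫ z : E, Real.exp (-A * ‖z‖ ^ 2)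
        = ∫ z : E, F z * Qx ^ (-b) := by
      rw [integral_mul_const]
      exact mul_comm _ _
    rw [h2, ← integral_sub hFg hFc]
    congr 1
    funext z
    simp [hD]
    ring
  -- the splitting set
  set s : Set E := {z : E | ‖z‖ ≤ ‖x‖ / 2} with hsdef
  have hs_meas : MeasurableSet s := measurableSet_le measurable_norm measurable_const
  have hcompl : sᶜ = {z : E | ‖x‖ / 2 < ‖z‖} := by
    ext z
    simp [hsdef, not_le]
  -- T2 integrand integrable
  have hT2int : Integrable (fun z : E => F z * (‖z‖ + Qx) ^ m) := by
    have h := GCE.integrable_gauss_poly (n := n) hA Qx m hQx1 hm0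
    have h2 : (fun z : E => F z * (‖z‖ + Qx) ^ m)
        = fun z : E => F z * (Qx + ‖z‖) ^ m := by
      funext z
      rw [add_comm ‖z‖ Qx]
    rw [h2]
    exact h
  have hT20 : 0 ≤ ∫ z in {z : E | ‖x‖ / 2 < ‖z‖}, F z * (‖z‖ + Qx) ^ m := by
    apply setIntegral_nonneg (measurableSet_lt measurable_const measurable_norm)
    intro z _
    exact mul_nonneg (hF0 z).le (Real.rpow_nonneg (by positivity) _)
  -- tail estimate
  have hA2 : (∫ z in sᶜ, |F z * D z|)
      ≤ K₂ * ∫ z in {z : E | ‖x‖ / 2 < ‖z‖}, F z * (‖z‖ + Qx) ^ m := by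
    rw [← hcompl, ← integral_const_mul]
    apply setIntegral_mono_on hFD.abs.integrableOn
      ((hT2int.const_mul K₂).integrableOn) hs_meas.compl
    intro z _
    rw [abs_mul, abs_of_nonneg (hF0 z).le]
    calc F z * |D z| ≤ F z * (K₂ * (‖z‖ + Qx) ^ m) :=
        mul_le_mul_of_nonneg_left (GCE.far b x z) (hF0 z).le
      _ = K₂ * (F z * (‖z‖ + Qx) ^ m) := by ring
  -- near estimate
  have hQb2 : (0:ℝ) ≤ Qx ^ (-b - 2) := Real.rpow_nonneg (Real.sqrt_nonneg _) _
  have hA1 : (∫ z in s, |F z * D z|)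
      ≤ K * ‖x‖ * Qx ^ (-b - 2) * ∫ z in s, F z * ‖z‖ := by
    rw [← integral_const_mul]
    apply setIntegral_mono_on hFD.abs.integrableOn
      ((hFn.const_mul _).integrableOn) hs_meas
    intro z hz
    rw [abs_mul, abs_of_nonneg (hF0 z).le]
    calc F z * |D z| ≤ F z * (K * (‖x‖ * ‖z‖) * Qx ^ (-b - 2)) :=
        mul_le_mul_of_nonneg_left (hnear x z hz) (hF0 z).le
      _ = K * ‖x‖ * Qx ^ (-b - 2) * (F z * ‖z‖) := by ring
  -- bounding the near set integral
  have hB : (∫ z in s, F z * ‖z‖)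
      ≤ (if ‖x‖ ≤ 1 then (‖x‖:ℝ) ^ (n + 1) * V else I₁) := by
    rcases le_or_gt ‖x‖ 1 with hx1 | hx1
    · rw [if_pos hx1]
      have hsball : s = Metric.closedBall (0 : E) (‖x‖ / 2) := by
        ext z
        simp [hsdef, Metric.mem_closedBall, dist_zero_right]
      have hr0 : (0:ℝ) ≤ ‖x‖ / 2 := by positivity
      have hstep : (∫ z in s, F z * ‖z‖) ≤ ∫ _z in s, (‖x‖ / 2) := by
        apply setIntegral_mono_on hFn.integrableOn _ hs_meas
        · intro z hz
          have hz' : ‖z‖ ≤ ‖x‖ / 2 := hz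
          have hF1 : F z ≤ 1 := by
            rw [hF]
            simp only []
            rw [Real.exp_le_one_iff]
            nlinarith [sq_nonneg ‖z‖]
          calc F z * ‖z‖ ≤ 1 * (‖x‖ / 2) :=
              mul_le_mul hF1 hz' (norm_nonneg z) zero_le_one
            _ = ‖x‖ / 2 := one_mul _
        · rw [integrableOn_const_iff]
          right
          rw [hsball]
          exact measure_closedBall_lt_top
      have hvol : (volume s).toReal = (‖x‖ / 2) ^ n * V := by
        rw [hsball, Measure.addHaar_closedBall _ _ hr0, finrank_euclideanSpace_fin,
          ENNReal.toReal_mul, ENNReal.toReal_ofReal (by positivity)]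
      calc (∫ z in s, F z * ‖z‖) ≤ ∫ _z in s, (‖x‖ / 2) := hstep
        _ = (volume s).toReal * (‖x‖ / 2) := by
            rw [setIntegral_const, smul_eq_mul]; rfl
        _ = (‖x‖ / 2) ^ n * V * (‖x‖ / 2) := by rw [hvol]
        _ = (‖x‖ / 2) ^ (n + 1) * V := by ring
        _ ≤ ‖x‖ ^ (n + 1) * V := by
            apply mul_le_mul_of_nonneg_right _ hV0
            apply pow_le_pow_left₀ hr0 (by linarith)
    · rw [if_neg (not_le.mpr hx1)]
      apply setIntegral_le_integral hFn
      filter_upwards with z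
      exact mul_nonneg (hF0 z).le (norm_nonneg z)
  -- final assembly
  rw [h1]
  have hsplit : (∫ z : E, |F z * D z|)
      = (∫ z in s, |F z * D z|) + ∫ z in sᶜ, |F z * D z| :=
    (integral_add_compl hs_meas hFD.abs).symm
  have habs : |∫ z : E, F z * D z| ≤ ∫ z : E, |F z * D z| := by
    have := norm_integral_le_integral_norm (μ := volume) (fun z : E => F z * D z)
    simp only [Real.norm_eq_abs] at this
    exact this
  set T1 : ℝ := ‖x‖ * Qx ^ (-b - 2) * (if ‖x‖ ≤ 1 then (‖x‖:ℝ) ^ (n + 1) else 1)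
    with hT1
  set T2 : ℝ := ∫ z in {z : E | ‖x‖ / 2 < ‖z‖}, F z * (‖z‖ + Qx) ^ m with hT2
  have hT10 : 0 ≤ T1 := by
    rw [hT1]
    rcases le_or_gt ‖x‖ 1 with h | h
    · rw [if_pos h]; positivity
    · rw [if_neg (not_le.mpr h)]; positivity
  have hmain1 : K * ‖x‖ * Qx ^ (-b - 2) * (∫ z in s, F z * ‖z‖)
      ≤ K * (V + I₁ + 1) * T1 := by
    have hKx : 0 ≤ K * ‖x‖ * Qx ^ (-b - 2) := by positivity
    rcases le_or_gt ‖x‖ 1 with h | h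
    · have hBB := hB
      rw [if_pos h] at hBB
      calc K * ‖x‖ * Qx ^ (-b - 2) * (∫ z in s, F z * ‖z‖)
          ≤ K * ‖x‖ * Qx ^ (-b - 2) * (‖x‖ ^ (n + 1) * V) := by
            apply mul_le_mul_of_nonneg_left _ hKx
            · have hBnn : 0 ≤ (∫ z in s, F z * ‖z‖) := by
                apply setIntegral_nonneg hs_meas
                intro z _
                exact mul_nonneg (hF0 z).le (norm_nonneg z)
              linarith
        _ = K * V * (‖x‖ * Qx ^ (-b - 2) * ‖x‖ ^ (n + 1)) := by ring
        _ ≤ K * (V + I₁ + 1) * (‖x‖ * Qx ^ (-b - 2) * ‖x‖ ^ (n + 1)) := by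
            apply mul_le_mul_of_nonneg_right _ (by positivity)
            apply mul_le_mul_of_nonneg_left _ hK.le
            linarith
        _ = K * (V + I₁ + 1) * T1 := by rw [hT1, if_pos h]
    · have hBB := hB
      rw [if_neg (not_le.mpr h)] at hBB
      calc K * ‖x‖ * Qx ^ (-b - 2) * (∫ z in s, F z * ‖z‖)
          ≤ K * ‖x‖ * Qx ^ (-b - 2) * I₁ := by
            apply mul_le_mul_of_nonneg_left hBB hKx
        _ = K * I₁ * (‖x‖ * Qx ^ (-b - 2)) := by ring
        _ ≤ K * (V + I₁ + 1) * (‖x‖ * Qx ^ (-b - 2)) := by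
            apply mul_le_mul_of_nonneg_right _ (by positivity)
            apply mul_le_mul_of_nonneg_left _ hK.le
            linarith
        _ = K * (V + I₁ + 1) * T1 := by
            rw [hT1, if_neg (not_le.mpr h), mul_one]
  calc |∫ z : E, F z * D z| ≤ ∫ z : E, |F z * D z| := habs
    _ = (∫ z in s, |F z * D z|) + ∫ z in sᶜ, |F z * D z| := hsplit
    _ ≤ K * (V + I₁ + 1) * T1 + K₂ * T2 := by
        apply add_le_add (hA1.trans hmain1) hA2
    _ ≤ C * T1 + C * T2 := by
        apply add_le_add
        · apply mul_le_mul_of_nonneg_right _ hT10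
          rw [hC]; linarith
        · apply mul_le_mul_of_nonneg_right _ hT20
          rw [hC]
          have : 0 < K * (V + I₁ + 1) := mul_pos hK (by linarith)
          linarith
    _ = C * (T1 + T2) := by ring
end

section
/- Let n > 0, A > 0, and b ∈ ℝ. Then lim_{|x|→∞} ⟨x⟩^b ∫_{ℝⁿ} e^(-A|x−y|²) ⟨y⟩^(-b) dy = ∫_{ℝⁿ} e^(-A|z|²) dz. -/
open MeasureTheory Real Filter

-- identity: sqrt-bracket ratio as rpow of quotient
lemma ratio_eq (b : ℝ) {P Q : ℝ} (hP : 0 < P) (hQ : 0 < Q) :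
    Real.sqrt P ^ b * Real.sqrt Q ^ (-b) = (P / Q) ^ (b / 2) := by
  rw [Real.sqrt_eq_rpow, Real.sqrt_eq_rpow, ← Real.rpow_mul hP.le, ← Real.rpow_mul hQ.le,
    show (1/2:ℝ) * -b = -(b/2) by ring, show (1/2:ℝ) * b = b/2 by ring,
    Real.rpow_neg hQ.le, div_eq_mul_inv, Real.div_rpow hP.le hQ.le, div_eq_mul_inv]

lemma peetre_bound (b : ℝ) {E : Type*} [NormedAddCommGroup E] (x z : E) :
    Real.sqrt (1 + ‖x‖ ^ 2) ^ b * Real.sqrt (1 + ‖x - z‖ ^ 2) ^ (-b)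
      ≤ (2 * (1 + ‖z‖ ^ 2)) ^ (|b| / 2) := by
  have hP : (0:ℝ) < 1 + ‖x‖ ^ 2 := by positivity
  have hQ : (0:ℝ) < 1 + ‖x - z‖ ^ 2 := by positivity
  have hR : (0:ℝ) < 2 * (1 + ‖z‖ ^ 2) := by positivity
  rw [ratio_eq b hP hQ]
  have h1 : ‖x‖ ≤ ‖x - z‖ + ‖z‖ := by
    simpa using norm_add_le (x - z) z
  have h2 : ‖x - z‖ ≤ ‖x‖ + ‖z‖ := by
    simpa using norm_sub_le x z
  have hx0 : (0:ℝ) ≤ ‖x‖ := norm_nonneg _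
  have hxz0 : (0:ℝ) ≤ ‖x - z‖ := norm_nonneg _
  have hz0 : (0:ℝ) ≤ ‖z‖ := norm_nonneg _
  have hPQ : 1 + ‖x‖ ^ 2 ≤ (1 + ‖x - z‖ ^ 2) * (2 * (1 + ‖z‖ ^ 2)) := by
    nlinarith [sq_nonneg (‖x - z‖ - ‖z‖), sq_nonneg (‖x - z‖ * ‖z‖)]
  have hQP : 1 + ‖x - z‖ ^ 2 ≤ (1 + ‖x‖ ^ 2) * (2 * (1 + ‖z‖ ^ 2)) := by
    nlinarith [sq_nonneg (‖x‖ - ‖z‖), sq_nonneg (‖x‖ * ‖z‖)]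
  rcases le_or_gt 0 b with hb | hb
  · rw [abs_of_nonneg hb]
    apply Real.rpow_le_rpow (by positivity) _ (by positivity)
    rw [div_le_iff₀ hQ]
    linarith [hPQ]
  · rw [abs_of_neg hb]
    have : (1 + ‖x‖ ^ 2) / (1 + ‖x - z‖ ^ 2) = ((1 + ‖x - z‖ ^ 2) / (1 + ‖x‖ ^ 2))⁻¹ := by
      rw [inv_div]
    rw [this, Real.inv_rpow (div_nonneg hQ.le hP.le), ← Real.rpow_neg (div_nonneg hQ.le hP.le), ← neg_div]
    apply Real.rpow_le_rpow (div_nonneg hQ.le hP.le) _ (by linarith)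
    rw [div_le_iff₀ hP]
    linarith [hQP]

lemma integrable_gaussian_euclidean (n : ℕ) {c : ℝ} (hc : 0 < c) :
    Integrable (fun z : EuclideanSpace ℝ (Fin n) => Real.exp (-c * ‖z‖ ^ 2)) := by
  have h := GaussianFourier.integrable_cexp_neg_mul_sq_norm_add
      (V := EuclideanSpace ℝ (Fin n)) (b := (c : ℂ)) (by simpa using hc) 0 0
  have h2 := h.norm
  simpa [Complex.norm_exp, neg_mul, ← Complex.ofReal_pow] using h2

lemma integrable_bound (n : ℕ) {A : ℝ} (hA : 0 < A) (s : ℝ) (hs : 0 ≤ s) :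
    Integrable (fun z : EuclideanSpace ℝ (Fin n) =>
      Real.exp (-A * ‖z‖ ^ 2) * (2 * (1 + ‖z‖ ^ 2)) ^ s) := by
  set ε := A / (2 * (s + 1)) with hεdef
  have hε : 0 < ε := by positivity
  have hεs : ε * s ≤ A / 2 := by
    rw [hεdef, div_mul_eq_mul_div, div_le_div_iff₀ (by positivity) (by norm_num)]
    nlinarith
  refine Integrable.mono'
    (((integrable_gaussian_euclidean n (show 0 < A / 2 by linarith)).const_mul
      ((2 / ε) ^ s * Real.exp (ε * s)))) ?_ ?_
  · apply Continuous.aestronglyMeasurable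
    apply Continuous.mul
    · exact Real.continuous_exp.comp (continuous_const.mul (continuous_norm.pow 2))
    · exact (continuous_const.mul (continuous_const.add (continuous_norm.pow 2))).rpow_const
        (fun z => Or.inr hs)
  · filter_upwards with z
    set t2 := ‖z‖ ^ 2 with ht2
    have ht : (0:ℝ) ≤ t2 := sq_nonneg _
    have h1 : 2 * (1 + t2) ≤ (2 / ε) * Real.exp (ε * (1 + t2)) := by
      have hx := Real.add_one_le_exp (ε * (1 + t2))
      rw [div_mul_eq_mul_div, le_div_iff₀ hε]
      nlinarith
    have h2 : (2 * (1 + t2)) ^ s ≤ ((2 / ε) * Real.exp (ε * (1 + t2))) ^ s :=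
      Real.rpow_le_rpow (by positivity) h1 hs
    have h3 : ((2 / ε) * Real.exp (ε * (1 + t2))) ^ s
        = (2 / ε) ^ s * Real.exp (ε * (1 + t2) * s) := by
      rw [Real.mul_rpow (by positivity) (Real.exp_nonneg _), ← Real.exp_mul]
    have h4 : Real.exp (-A * t2) * Real.exp (ε * (1 + t2) * s)
        ≤ Real.exp (ε * s) * Real.exp (-(A / 2) * t2) := by
      rw [← Real.exp_add, ← Real.exp_add]
      apply Real.exp_le_exp.2
      nlinarith
    have hnn : (0:ℝ) ≤ Real.exp (-A * t2) * (2 * (1 + t2)) ^ s := by positivity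
    rw [Real.norm_of_nonneg hnn]
    calc Real.exp (-A * t2) * (2 * (1 + t2)) ^ s
        ≤ Real.exp (-A * t2) * ((2 / ε) ^ s * Real.exp (ε * (1 + t2) * s)) := by
          rw [← h3]; exact mul_le_mul_of_nonneg_left h2 (Real.exp_nonneg _)
      _ = (2 / ε) ^ s * (Real.exp (-A * t2) * Real.exp (ε * (1 + t2) * s)) := by ring
      _ ≤ (2 / ε) ^ s * (Real.exp (ε * s) * Real.exp (-(A / 2) * t2)) :=
          mul_le_mul_of_nonneg_left h4 (by positivity)
      _ = (2 / ε) ^ s * Real.exp (ε * s) * Real.exp (-(A / 2) * t2) := by ring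

open RealInnerProductSpace in
lemma ratio_tendsto (n : ℕ) (b : ℝ) (z : EuclideanSpace ℝ (Fin n)) :
    Tendsto (fun x : EuclideanSpace ℝ (Fin n) =>
        Real.sqrt (1 + ‖x‖ ^ 2) ^ b * Real.sqrt (1 + ‖x - z‖ ^ 2) ^ (-b))
      (comap norm atTop) (nhds 1) := by
  set l := comap (norm : EuclideanSpace ℝ (Fin n) → ℝ) atTop with hl
  -- the quotient tends to 1
  have hd : Tendsto (fun x : EuclideanSpace ℝ (Fin n) => (‖z‖ ^ 2 - 2 * ⟪x, z⟫) / (1 + ‖x‖ ^ 2)) l (nhds 0) := by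
    rw [tendsto_zero_iff_abs_tendsto_zero]
    have hC : Tendsto (fun x : EuclideanSpace ℝ (Fin n) => (‖z‖ ^ 2 + 2 * ‖z‖) / ‖x‖) l (nhds 0) :=
      (tendsto_const_nhds.div_atTop tendsto_id).comp tendsto_comap
    refine squeeze_zero' (Eventually.of_forall fun x => abs_nonneg _) ?_ hC
    have hev : ∀ᶠ x : EuclideanSpace ℝ (Fin n) in l, 1 ≤ ‖x‖ := tendsto_comap.eventually (eventually_ge_atTop 1)
    filter_upwards [hev] with x hx
    simp only [Function.comp_apply]
    have hD : (0:ℝ) < 1 + ‖x‖ ^ 2 := by positivity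
    have hx0 : (0:ℝ) < ‖x‖ := lt_of_lt_of_le one_pos hx
    have h5 : |‖z‖ ^ 2 - 2 * ⟪x, z⟫| ≤ ‖z‖ ^ 2 + 2 * (‖x‖ * ‖z‖) := by
      calc |‖z‖ ^ 2 - 2 * ⟪x, z⟫| ≤ |‖z‖ ^ 2| + |2 * ⟪x, z⟫| := abs_sub _ _
        _ ≤ ‖z‖ ^ 2 + 2 * (‖x‖ * ‖z‖) := by
            rw [abs_of_nonneg (sq_nonneg _), abs_mul, abs_two]
            have := abs_real_inner_le_norm x z
            nlinarith
    rw [abs_div, abs_of_pos hD, div_le_div_iff₀ hD hx0]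
    have hz0 : (0:ℝ) ≤ ‖z‖ := norm_nonneg _
    nlinarith [mul_le_mul_of_nonneg_right h5 hx0.le,
      mul_le_mul_of_nonneg_left hx (mul_nonneg (mul_nonneg hz0 hz0) hx0.le),
      mul_le_mul_of_nonneg_left hx (mul_nonneg hz0 (mul_nonneg hx0.le hx0.le)),
      sq_nonneg (‖x‖ - 1), sq_nonneg ‖z‖]
  have hq : Tendsto (fun x : EuclideanSpace ℝ (Fin n) => (1 + ‖x‖ ^ 2) / (1 + ‖x - z‖ ^ 2)) l (nhds 1) := by
    have hq1 : Tendsto (fun x : EuclideanSpace ℝ (Fin n) => 1 + (‖z‖ ^ 2 - 2 * ⟪x, z⟫) / (1 + ‖x‖ ^ 2)) l (nhds 1) := by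
      simpa using tendsto_const_nhds.add hd
    have hq2 := hq1.inv₀ (by norm_num)
    rw [show ((1:ℝ))⁻¹ = 1 by norm_num] at hq2
    refine hq2.congr fun x => ?_
    have hD : (0:ℝ) < 1 + ‖x‖ ^ 2 := by positivity
    have key : 1 + (‖z‖ ^ 2 - 2 * ⟪x, z⟫) / (1 + ‖x‖ ^ 2)
        = (1 + ‖x - z‖ ^ 2) / (1 + ‖x‖ ^ 2) := by
      rw [@norm_sub_sq_real]
      field_simp
      ring
    rw [key, inv_div]
  have hcont : ContinuousAt (fun t : ℝ => t ^ (b / 2)) 1 :=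
    Real.continuousAt_rpow_const 1 _ (Or.inl one_ne_zero)
  have hfin := hcont.tendsto.comp hq
  rw [Real.one_rpow] at hfin
  refine hfin.congr fun x => ?_
  simp only [Function.comp_apply]
  exact (ratio_eq b (P := 1 + ‖x‖ ^ 2) (Q := 1 + ‖x - z‖ ^ 2) (by positivity) (by positivity)).symm

theorem gaussian_convolution_limit (n : ℕ) (hn : 0 < n) (A b : ℝ) (hA : 0 < A) :
    Tendsto
      (fun x : EuclideanSpace ℝ (Fin n) =>
        Real.sqrt (1 + ‖x‖ ^ 2) ^ b
          * ∫ y : EuclideanSpace ℝ (Fin n),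
              Real.exp (-A * ‖x - y‖ ^ 2) * Real.sqrt (1 + ‖y‖ ^ 2) ^ (-b))
      (comap norm atTop)
      (nhds (∫ z : EuclideanSpace ℝ (Fin n), Real.exp (-A * ‖z‖ ^ 2))) := by
  have key : ∀ x : EuclideanSpace ℝ (Fin n),
      Real.sqrt (1 + ‖x‖ ^ 2) ^ b
          * ∫ y : EuclideanSpace ℝ (Fin n),
              Real.exp (-A * ‖x - y‖ ^ 2) * Real.sqrt (1 + ‖y‖ ^ 2) ^ (-b)
        = ∫ z : EuclideanSpace ℝ (Fin n), Real.exp (-A * ‖z‖ ^ 2)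
            * (Real.sqrt (1 + ‖x‖ ^ 2) ^ b * Real.sqrt (1 + ‖x - z‖ ^ 2) ^ (-b)) := by
    intro x
    have h1 : (∫ y : EuclideanSpace ℝ (Fin n),
          Real.exp (-A * ‖x - y‖ ^ 2) * Real.sqrt (1 + ‖y‖ ^ 2) ^ (-b))
        = ∫ z : EuclideanSpace ℝ (Fin n),
            Real.exp (-A * ‖z‖ ^ 2) * Real.sqrt (1 + ‖x - z‖ ^ 2) ^ (-b) := by
      rw [← integral_sub_left_eq_self (fun y : EuclideanSpace ℝ (Fin n) =>
        Real.exp (-A * ‖x - y‖ ^ 2) * Real.sqrt (1 + ‖y‖ ^ 2) ^ (-b)) volume x]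
      congr 1
      funext z
      simp [sub_sub_cancel]
    rw [h1, ← integral_const_mul]
    congr 1
    funext z
    ring
  refine Tendsto.congr (fun x => (key x).symm) ?_
  refine tendsto_integral_filter_of_dominated_convergence
    (fun z : EuclideanSpace ℝ (Fin n) =>
      Real.exp (-A * ‖z‖ ^ 2) * (2 * (1 + ‖z‖ ^ 2)) ^ (|b| / 2)) ?_ ?_ ?_ ?_
  · refine Eventually.of_forall fun x => ?_
    apply Continuous.aestronglyMeasurable
    apply Continuous.mul
    · exact Real.continuous_exp.comp (continuous_const.mul (continuous_norm.pow 2))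
    · refine Continuous.mul continuous_const (Continuous.rpow_const ?_ fun z => Or.inl ?_)
      · exact Real.continuous_sqrt.comp
          (continuous_const.add (((continuous_const.sub continuous_id).norm).pow 2))
      · exact ne_of_gt (Real.sqrt_pos.2 (by positivity))
  · refine Eventually.of_forall fun x => Eventually.of_forall fun z => ?_
    have hnn : (0:ℝ) ≤ Real.exp (-A * ‖z‖ ^ 2)
        * (Real.sqrt (1 + ‖x‖ ^ 2) ^ b * Real.sqrt (1 + ‖x - z‖ ^ 2) ^ (-b)) := by
      have h1 : (0:ℝ) ≤ Real.sqrt (1 + ‖x‖ ^ 2) ^ b := Real.rpow_nonneg (Real.sqrt_nonneg _) _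
      have h2 : (0:ℝ) ≤ Real.sqrt (1 + ‖x - z‖ ^ 2) ^ (-b) :=
        Real.rpow_nonneg (Real.sqrt_nonneg _) _
      positivity
    rw [Real.norm_of_nonneg hnn]
    exact mul_le_mul_of_nonneg_left (peetre_bound b x z) (Real.exp_nonneg _)
  · exact integrable_bound n hA (|b| / 2) (by positivity)
  · refine Eventually.of_forall fun z => ?_
    have h := (tendsto_const_nhds (x := Real.exp (-A * ‖z‖ ^ 2))
      (f := comap (norm : EuclideanSpace ℝ (Fin n) → ℝ) atTop)).mul (ratio_tendsto n b z)
    simpa using h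
end

section
/- Let n > 0, A > 0, b ∈ ℝ. There exists C > 0 such that for all x ∈ ℝⁿ, | ∫_{|z| ≤ |x|/2} e^(-A|z|²) [ (1+|x−z|²)^(-b/2) − (1+|x|²)^(-b/2) ] dz | ≤ C |x| ⟨x⟩^(-b-2) ( |x|^{n+1} 1_{|x|≤1} + 1_{|x|>1} ). -/
open MeasureTheory Real

lemma ratio_rpow_le {t e : ℝ} (h1 : 1/4 ≤ t) (h2 : t ≤ 4) : t ^ e ≤ 4 ^ |e| := by
  rcases le_or_gt 0 e with he | he
  · rw [abs_of_nonneg he]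
    exact Real.rpow_le_rpow (by linarith) h2 he
  · rw [abs_of_neg he]
    calc t ^ e ≤ (1/4 : ℝ) ^ e := Real.rpow_le_rpow_of_nonpos (by linarith) h1 he.le
    _ = 4 ^ (-e) := by
        rw [one_div, ← Real.rpow_neg_one, ← Real.rpow_mul (by norm_num)]
        norm_num

lemma key_mvt (c r : ℝ) {s t : ℝ} (hr : 0 ≤ r)
    (hs1 : r^2/4 ≤ s) (hs2 : s ≤ 9*r^2/4) (ht1 : r^2/4 ≤ t) (ht2 : t ≤ 9*r^2/4) :
    |(1+s) ^ c - (1+t) ^ c| ≤ |c| * 4 ^ |c-1| * (1+r^2) ^ (c-1) * |s - t| := by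
  set S : Set ℝ := Set.Icc (r^2/4) (9*r^2/4) with hS
  have hr2 : (0:ℝ) ≤ r^2 := sq_nonneg r
  have hd : ∀ u ∈ S, HasDerivWithinAt (fun u : ℝ => (1+u) ^ c) (c * (1+u) ^ (c-1)) S u := by
    intro u hu
    have h1u : (0:ℝ) < 1 + u := by have := hu.1; simp only [hS] at *; nlinarith
    have h := (Real.hasDerivAt_rpow_const (x := 1+u) (p := c) (Or.inl h1u.ne')).comp u
      ((hasDerivAt_id u).const_add 1)
    simpa [Function.comp_def] using h.hasDerivWithinAt
  have bound : ∀ u ∈ S, ‖c * (1+u) ^ (c-1)‖ ≤ |c| * (4 ^ |c-1| * (1+r^2) ^ (c-1)) := by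
    intro u hu
    have hu1 : r^2/4 ≤ u := hu.1
    have hu2 : u ≤ 9*r^2/4 := hu.2
    have h1u : (0:ℝ) < 1 + u := by nlinarith
    have h1r : (0:ℝ) < 1 + r^2 := by nlinarith
    rw [norm_mul, Real.norm_eq_abs, Real.norm_eq_abs, abs_of_pos (Real.rpow_pos_of_pos h1u _)]
    gcongr |c| * ?_
    set τ : ℝ := (1+u)/(1+r^2) with hτ
    have hτ1 : 1/4 ≤ τ := by rw [hτ, le_div_iff₀ h1r]; nlinarith
    have hτ2 : τ ≤ 4 := by rw [hτ, div_le_iff₀ h1r]; nlinarith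
    have heq : 1 + u = τ * (1+r^2) := by rw [hτ, div_mul_cancel₀ _ h1r.ne']
    rw [heq, Real.mul_rpow (by linarith) h1r.le]
    exact mul_le_mul_of_nonneg_right (ratio_rpow_le hτ1 hτ2) (Real.rpow_pos_of_pos h1r _).le
  have := (convex_Icc (r^2/4) (9*r^2/4)).norm_image_sub_le_of_norm_hasDerivWithin_le hd bound
    (Set.mem_Icc.2 ⟨ht1, ht2⟩) (Set.mem_Icc.2 ⟨hs1, hs2⟩)
  simpa [Real.norm_eq_abs, mul_assoc] using this

section
variable {n : ℕ}

lemma key_pointwise (b : ℝ) (x z : EuclideanSpace ℝ (Fin n)) (hz : ‖z‖ ≤ ‖x‖/2) :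
    |(1 + ‖x - z‖^2) ^ (-b/2) - (1 + ‖x‖^2) ^ (-b/2)| ≤
      (3 * |(-b/2)| * 4 ^ |(-b/2) - 1|) * ((1 + ‖x‖^2) ^ ((-b/2) - 1) * (‖x‖ * ‖z‖)) := by
  set r := ‖x‖ with hrdef
  set a := ‖x - z‖ with hadef
  have hr0 : (0:ℝ) ≤ r := norm_nonneg _
  have ha0 : (0:ℝ) ≤ a := norm_nonneg _
  have hz0 : (0:ℝ) ≤ ‖z‖ := norm_nonneg _
  have hub : a ≤ r + ‖z‖ := norm_sub_le x z
  have hlb : r ≤ a + ‖z‖ := by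
    calc r = ‖(x - z) + z‖ := by rw [sub_add_cancel]
    _ ≤ a + ‖z‖ := norm_add_le _ _
  have h1 : r/2 ≤ a := by linarith
  have h2 : a ≤ 3*r/2 := by linarith
  have hs1 : r^2/4 ≤ a^2 := by nlinarith
  have hs2 : a^2 ≤ 9*r^2/4 := by nlinarith
  have ht1 : r^2/4 ≤ r^2 := by nlinarith
  have ht2 : r^2 ≤ 9*r^2/4 := by nlinarith
  have hst : |a^2 - r^2| ≤ 3 * (r * ‖z‖) := by
    rw [abs_le]; constructor <;> nlinarith
  have hmvt := key_mvt (-b/2) r hr0 hs1 hs2 ht1 ht2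
  have hstep := mul_le_mul_of_nonneg_left hst
    (show (0:ℝ) ≤ |(-b/2)| * 4 ^ |(-b/2)-1| * (1+r^2) ^ ((-b/2)-1) by positivity)
  calc |(1 + a^2) ^ (-b/2) - (1 + r^2) ^ (-b/2)|
      ≤ |(-b/2)| * 4 ^ |(-b/2)-1| * (1+r^2) ^ ((-b/2)-1) * |a^2 - r^2| := hmvt
    _ ≤ |(-b/2)| * 4 ^ |(-b/2)-1| * (1+r^2) ^ ((-b/2)-1) * (3 * (r * ‖z‖)) := hstep
    _ = (3 * |(-b/2)| * 4 ^ |(-b/2) - 1|) * ((1+r^2) ^ ((-b/2) - 1) * (r * ‖z‖)) := by ring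

lemma gauss_int {A : ℝ} (hA : 0 < A) :
    Integrable (fun z : EuclideanSpace ℝ (Fin n) => Real.exp (-A * ‖z‖^2) * ‖z‖) := by
  have h0 : (0:ℝ) < ((A/2 : ℝ) : ℂ).re := by simpa using by linarith
  have hint : Integrable (fun z : EuclideanSpace ℝ (Fin n) => Real.exp (-(A/2) * ‖z‖^2)) := by
    have h := (GaussianFourier.integrable_cexp_neg_mul_sq_norm_add_of_euclideanSpace
      (b := ((A/2 : ℝ) : ℂ)) h0 0 (0 : EuclideanSpace ℝ (Fin n))).norm
    refine h.congr (Filter.Eventually.of_forall fun z => ?_)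
    simp only [Complex.norm_exp]
    norm_num [← Complex.ofReal_pow]
  set κ : ℝ := 1 / (2 * Real.sqrt (A/2)) with hκ
  have hsq : (0:ℝ) < Real.sqrt (A/2) := Real.sqrt_pos.2 (by linarith)
  have hκ0 : 0 < κ := by positivity
  refine ((hint.const_mul κ).mono' ?_ (Filter.Eventually.of_forall fun z => ?_))
  · exact ((Real.continuous_exp.comp (by continuity)).mul continuous_norm).aestronglyMeasurable
  · set t : ℝ := ‖z‖ with ht
    have ht0 : 0 ≤ t := norm_nonneg _
    have h1 : 2 * Real.sqrt (A/2) * t ≤ 1 + (A/2) * t^2 := by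
      nlinarith [sq_nonneg (Real.sqrt (A/2) * t - 1), Real.sq_sqrt (by linarith : (0:ℝ) ≤ A/2)]
    have h2 : (A/2) * t^2 + 1 ≤ Real.exp ((A/2) * t^2) := Real.add_one_le_exp _
    have h3 : t ≤ κ * Real.exp ((A/2) * t^2) := by
      rw [hκ]
      rw [div_mul_eq_mul_div, le_div_iff₀ (by positivity)]
      nlinarith
    have h4 : Real.exp (-A * t^2) = Real.exp (-(A/2) * t^2) * Real.exp (-(A/2) * t^2) := by
      rw [← Real.exp_add]; ring_nf
    rw [Real.norm_eq_abs, abs_of_nonneg (by positivity)]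
    calc Real.exp (-A * t^2) * t
        = Real.exp (-(A/2) * t^2) * (Real.exp (-(A/2) * t^2) * t) := by rw [h4]; ring
      _ ≤ Real.exp (-(A/2) * t^2) * κ := by
          refine mul_le_mul_of_nonneg_left ?_ (Real.exp_nonneg _)
          have := mul_le_mul_of_nonneg_left h3 (Real.exp_nonneg (-(A/2) * t^2))
          calc Real.exp (-(A/2) * t^2) * t ≤ Real.exp (-(A/2) * t^2) * (κ * Real.exp ((A/2) * t^2)) := this
            _ = κ * (Real.exp (-(A/2) * t^2) * Real.exp ((A/2) * t^2)) := by ring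
            _ = κ := by rw [← Real.exp_add]; ring_nf; simp
      _ = κ * Real.exp (-(A/2) * t^2) := by ring
end

set_option maxHeartbeats 1000000 in
theorem gaussian_inner_difference_estimate (n : ℕ) (hn : 0 < n) (A b : ℝ) (hA : 0 < A) :
    ∃ C > 0, ∀ x : EuclideanSpace ℝ (Fin n),
      |∫ z in {z : EuclideanSpace ℝ (Fin n) | ‖z‖ ≤ ‖x‖ / 2},
          Real.exp (-A * ‖z‖ ^ 2)
            * ((1 + ‖x - z‖ ^ 2) ^ (-b / 2) - (1 + ‖x‖ ^ 2) ^ (-b / 2))|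
      ≤ C * ‖x‖ * Real.sqrt (1 + ‖x‖ ^ 2) ^ (-b - 2)
          * (if ‖x‖ ≤ 1 then ‖x‖ ^ (n + 1) else 1) := by
  set M : ℝ := 3 * |(-b/2)| * 4 ^ |(-b/2) - 1| with hM
  have hM0 : 0 ≤ M := by positivity
  set g : EuclideanSpace ℝ (Fin n) → ℝ := fun z => Real.exp (-A * ‖z‖^2) * ‖z‖ with hg
  have gint : Integrable g := gauss_int hA
  set K : ℝ := ∫ z, g z with hK
  have hK0 : 0 ≤ K := integral_nonneg fun z => by positivity
  set V : ℝ := (volume (Metric.ball (0 : EuclideanSpace ℝ (Fin n)) 1)).toReal with hV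
  have hV0 : 0 ≤ V := ENNReal.toReal_nonneg
  refine ⟨(M+1) * (V + K + 1), by positivity, fun x => ?_⟩
  set r := ‖x‖ with hr
  have hr0 : (0:ℝ) ≤ r := norm_nonneg _
  have hseteq : {z : EuclideanSpace ℝ (Fin n) | ‖z‖ ≤ r / 2}
      = Metric.closedBall (0 : EuclideanSpace ℝ (Fin n)) (r/2) := by
    ext z; simp [Metric.mem_closedBall, dist_zero_right]
  have hfin : volume (Metric.closedBall (0 : EuclideanSpace ℝ (Fin n)) (r/2)) < ⊤ :=
    measure_closedBall_lt_top
  have hsqrt : Real.sqrt (1 + r^2) ^ (-b-2) = (1 + r^2) ^ ((-b/2) - 1) := by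
    rw [Real.sqrt_eq_rpow, ← Real.rpow_mul (by positivity : (0:ℝ) ≤ 1 + r^2)]
    congr 1; ring
  set P : ℝ := (1 + r^2) ^ ((-b/2) - 1) with hP
  have hP0 : (0:ℝ) ≤ P := (Real.rpow_pos_of_pos (by positivity) _).le
  rw [hseteq, hsqrt]
  have hkey : ∀ z ∈ Metric.closedBall (0 : EuclideanSpace ℝ (Fin n)) (r/2),
      ‖Real.exp (-A * ‖z‖ ^ 2) * ((1 + ‖x - z‖ ^ 2) ^ (-b / 2) - (1 + r ^ 2) ^ (-b / 2))‖
        ≤ Real.exp (-A * ‖z‖ ^ 2) * (M * (P * (r * ‖z‖))) := by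
    intro z hz
    rw [Metric.mem_closedBall, dist_zero_right] at hz
    have hkp := key_pointwise b x z hz
    rw [norm_mul, Real.norm_eq_abs, Real.norm_eq_abs, abs_of_pos (Real.exp_pos _)]
    exact mul_le_mul_of_nonneg_left hkp (Real.exp_pos _).le
  by_cases hx1 : r ≤ 1
  · rw [if_pos hx1]
    have hb1 : ∀ z ∈ Metric.closedBall (0 : EuclideanSpace ℝ (Fin n)) (r/2),
        ‖Real.exp (-A * ‖z‖ ^ 2) * ((1 + ‖x - z‖ ^ 2) ^ (-b / 2) - (1 + r ^ 2) ^ (-b / 2))‖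
          ≤ M * (P * (r * (r/2))) := by
      intro z hz
      have h0 := hkey z hz
      rw [Metric.mem_closedBall, dist_zero_right] at hz
      have he1 : Real.exp (-A * ‖z‖^2) ≤ 1 := Real.exp_le_one_iff.2 (by nlinarith [sq_nonneg ‖z‖])
      calc ‖Real.exp (-A * ‖z‖ ^ 2) * ((1 + ‖x - z‖ ^ 2) ^ (-b / 2) - (1 + r ^ 2) ^ (-b / 2))‖
          ≤ Real.exp (-A * ‖z‖ ^ 2) * (M * (P * (r * ‖z‖))) := h0
        _ ≤ 1 * (M * (P * (r * (r/2)))) := by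
            refine mul_le_mul he1 ?_ (by positivity) zero_le_one
            gcongr
        _ = M * (P * (r * (r/2))) := one_mul _
    have hineq := norm_setIntegral_le_of_norm_le_const hfin
      hb1
    have hvol : (volume (Metric.closedBall (0 : EuclideanSpace ℝ (Fin n)) (r/2))).toReal
        = (r/2)^n * V := by
      rw [Measure.addHaar_closedBall _ _ (by positivity : (0:ℝ) ≤ r/2)]
      rw [ENNReal.toReal_mul, ENNReal.toReal_ofReal (by positivity)]
      congr 2
      simp [finrank_euclideanSpace_fin]
    rw [Real.norm_eq_abs, measureReal_def, hvol] at hineq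
    have hpow : (r/2) * (r/2)^n ≤ r^(n+1) := by
      rw [pow_succ']
      exact mul_le_mul (by linarith) (pow_le_pow_left₀ (by positivity) (by linarith) n)
        (by positivity) hr0
    refine hineq.trans ?_
    calc M * (P * (r * (r/2))) * ((r/2)^n * V)
        = (M*V) * (P * (r * ((r/2) * (r/2)^n))) := by ring
      _ ≤ ((M+1)*(V+K+1)) * (P * (r * r^(n+1))) := by
          refine mul_le_mul (by nlinarith) ?_ (by positivity) (by nlinarith)
          exact mul_le_mul_of_nonneg_left (mul_le_mul_of_nonneg_left hpow hr0) hP0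
      _ = (M+1)*(V+K+1) * r * P * r^(n+1) := by ring
  · rw [if_neg hx1]
    have h1 : |∫ z in Metric.closedBall (0 : EuclideanSpace ℝ (Fin n)) (r/2),
        Real.exp (-A * ‖z‖ ^ 2) * ((1 + ‖x - z‖ ^ 2) ^ (-b / 2) - (1 + r ^ 2) ^ (-b / 2))|
        ≤ ∫ z in Metric.closedBall (0 : EuclideanSpace ℝ (Fin n)) (r/2),
            ‖Real.exp (-A * ‖z‖ ^ 2) * ((1 + ‖x - z‖ ^ 2) ^ (-b / 2) - (1 + r ^ 2) ^ (-b / 2))‖ := by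
      rw [← Real.norm_eq_abs]; exact norm_integral_le_integral_norm _
    have hbound : ∀ z ∈ Metric.closedBall (0 : EuclideanSpace ℝ (Fin n)) (r/2),
        ‖Real.exp (-A * ‖z‖ ^ 2) * ((1 + ‖x - z‖ ^ 2) ^ (-b / 2) - (1 + r ^ 2) ^ (-b / 2))‖
          ≤ (M * P * r) * g z := by
      intro z hz
      refine (hkey z hz).trans (le_of_eq ?_)
      rw [hg]; ring
    have h2 : (∫ z in Metric.closedBall (0 : EuclideanSpace ℝ (Fin n)) (r/2),
        ‖Real.exp (-A * ‖z‖ ^ 2) * ((1 + ‖x - z‖ ^ 2) ^ (-b / 2) - (1 + r ^ 2) ^ (-b / 2))‖)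
        ≤ ∫ z in Metric.closedBall (0 : EuclideanSpace ℝ (Fin n)) (r/2), (M * P * r) * g z := by
      refine integral_mono_of_nonneg (Filter.Eventually.of_forall fun z => norm_nonneg _)
        ((gint.const_mul _).restrict) ?_
      rw [Filter.EventuallyLE, ae_restrict_iff' measurableSet_closedBall]
      exact Filter.Eventually.of_forall hbound
    have h3 : (∫ z in Metric.closedBall (0 : EuclideanSpace ℝ (Fin n)) (r/2), (M * P * r) * g z)
        = (M * P * r) * ∫ z in Metric.closedBall (0 : EuclideanSpace ℝ (Fin n)) (r/2), g z :=
      integral_const_mul _ _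
    have h4 : (∫ z in Metric.closedBall (0 : EuclideanSpace ℝ (Fin n)) (r/2), g z) ≤ K :=
      setIntegral_le_integral gint (Filter.Eventually.of_forall fun z => by rw [hg]; positivity)
    have h5 : (M * P * r) * (∫ z in Metric.closedBall (0 : EuclideanSpace ℝ (Fin n)) (r/2), g z)
        ≤ (M * P * r) * K := mul_le_mul_of_nonneg_left h4 (by positivity)
    have hMK : M * K ≤ (M+1)*(V+K+1) := by nlinarith
    calc |∫ z in Metric.closedBall (0 : EuclideanSpace ℝ (Fin n)) (r/2),
          Real.exp (-A * ‖z‖ ^ 2) * ((1 + ‖x - z‖ ^ 2) ^ (-b / 2) - (1 + r ^ 2) ^ (-b / 2))|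
        ≤ (M * P * r) * K := le_trans h1 (le_trans h2 (le_trans (le_of_eq h3) h5))
      _ = (M * K) * (P * r) := by ring
      _ ≤ ((M+1)*(V+K+1)) * (P * r) := mul_le_mul_of_nonneg_right hMK (by positivity)
      _ = (M+1)*(V+K+1) * r * P * 1 := by ring
end
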